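/- arXiv:1809.01975 — 5 statements merged into one kernel-verified Lean document; each statement's English description precedes it below -/
import Mathlib

section
/- Consider the model with design (DD) or (RD) and suppose the noise distribution satisfies P[ξ_1 ≤ -1/2] < P[ξ_1 ≤ 1/2]. Let N = #{i ∈ {1,…,n} : X_i ≤ h}, S = #{i ∈ {1,…,N} : Y_i ≤ 1/2}, and define the test T_n^0 = 1(S ≤ cN), where c is any fixed number strictly between P[ξ_1 ≤ -1/2] and P[ξ_1 ≤ 1/2]. If n·h → ∞ as n → ∞, then T_n^0 is consistent on the class S_0, i.e. γ_n(T_n^0, S_0) = P_∅[T_n^0 = 1] + sup_{G ∈ S_0, |G| ≥ h} P_G[T_n^0 = 0] → 0. -/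
open MeasureTheory ProbabilityTheory Set Filter Real
open scoped ENNReal NNReal Topology symmDiff

/-- Lebesgue measure of the symmetric difference `[a,b] Δ [c,d]`. -/
noncomputable def sd (a b c d : ℝ) : ℝ :=
  (MeasureTheory.volume ((Set.Icc a b) ∆ (Set.Icc c d))).toReal

/-- Deterministic regular design (DD): the i-th (1-based) design point is i/n. -/
def IsDD {Ω : Type*} (n : ℕ) (X : Fin n → Ω → ℝ) : Prop :=
  ∀ i ω, X i ω = ((i : ℕ) + 1 : ℝ) / n

/-- Random uniform design (RD): the design is the increasing reordering of
n i.i.d. uniform random variables on `[0,1]`. -/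
def IsRD {Ω : Type*} [MeasurableSpace Ω] (P : MeasureTheory.Measure Ω) (n : ℕ)
    (X : Fin n → Ω → ℝ) : Prop :=
  (∀ i, Measurable (X i)) ∧ (∀ ω, Monotone fun i => X i ω) ∧
  ∃ U : Fin n → Ω → ℝ, (∀ i, Measurable (U i)) ∧
    ProbabilityTheory.iIndepFun U P ∧
    (∀ i, MeasureTheory.Measure.map (U i) P
        = MeasureTheory.volume.restrict (Set.Icc (0:ℝ) 1)) ∧
    (∀ ω, ∃ p : Equiv.Perm (Fin n), ∀ i, X i ω = U (p i) ω)

/-- i.i.d. subgaussian noise with parameter σ. -/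
def IsIidSubgaussian {Ω : Type*} [MeasurableSpace Ω] (P : MeasureTheory.Measure Ω)
    (n : ℕ) (ξ : Fin n → Ω → ℝ) (σ : ℝ) : Prop :=
  (∀ i, Measurable (ξ i)) ∧
  ProbabilityTheory.iIndepFun ξ P ∧
  (∀ i j, MeasureTheory.Measure.map (ξ i) P = MeasureTheory.Measure.map (ξ j) P) ∧
  (∀ (i : Fin n) (u : ℝ), ∫ ω, Real.exp (u * ξ i ω) ∂P ≤ Real.exp (σ^2 * u^2 / 2))

/-- i.i.d. centered Gaussian noise with variance σ². -/
def IsIidGaussian {Ω : Type*} [MeasurableSpace Ω] (P : MeasureTheory.Measure Ω)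
    (n : ℕ) (ξ : Fin n → Ω → ℝ) (σ : ℝ) : Prop :=
  (∀ i, Measurable (ξ i)) ∧
  ProbabilityTheory.iIndepFun ξ P ∧
  (∀ i, MeasureTheory.Measure.map (ξ i) P
      = ProbabilityTheory.gaussianReal 0 ⟨σ^2, sq_nonneg σ⟩)

/-- The noise vector is independent of the design vector. -/
def NoiseIndepDesign {Ω : Type*} [MeasurableSpace Ω] (P : MeasureTheory.Measure Ω)
    (n : ℕ) (X ξ : Fin n → Ω → ℝ) : Prop :=
  ProbabilityTheory.IndepFun (fun ω => fun i => X i ω) (fun ω => fun i => ξ i ω) P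

/-- The observed label attached to the design point `X i` when the true segment
is `[a,b]`: `Y i = 1(X i ∈ [a,b]) + ξ i`. -/
noncomputable def obsY {Ω : Type*} {n : ℕ} (X ξ : Fin n → Ω → ℝ) (a b : ℝ)
    (i : Fin n) (ω : Ω) : ℝ :=
  (if X i ω ∈ Set.Icc a b then (1:ℝ) else 0) + ξ i ω

section MyHelpers
set_option linter.unusedSectionVars false
set_option linter.unusedVariables false
set_option linter.unreachableTactic false
set_option linter.unusedTactic false
variable {Ω : Type} [MeasurableSpace Ω] (P : Measure Ω) [IsProbabilityMeasure P]

lemma bdd_int' {f : Ω → ℝ} (hf : Measurable f) (C : ℝ) (hC : ∀ ω, |f ω| ≤ C) :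
    Integrable f P :=
  (integrable_const C).mono' hf.aestronglyMeasurable (ae_of_all _ fun ω => by
    simpa [Real.norm_eq_abs] using hC ω)

lemma int_ite' {f : Ω → ℝ} (hf : Measurable f) (t : ℝ) :
    ∫ ω, (if f ω ≤ t then (1:ℝ) else 0) ∂P = (P {ω | f ω ≤ t}).toReal := by
  have hs : MeasurableSet {ω | f ω ≤ t} := hf measurableSet_Iic
  have h1 : (fun ω => if f ω ≤ t then (1:ℝ) else 0)
      = Set.indicator {ω | f ω ≤ t} (fun _ => (1:ℝ)) := by
    funext ω; simp [Set.indicator_apply, Set.mem_setOf_eq]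
  rw [h1, integral_indicator_const _ hs]; simp; rfl

lemma sq_sum_le' {n : ℕ} (C : Fin n → Ω → ℝ)
    (hmeas : ∀ i, Measurable (C i)) (hbdd : ∀ i ω, |C i ω| ≤ 1)
    (hcross : ∀ i j, i ≠ j → ∫ ω, C i ω * C j ω ∂P = 0)
    (r : Fin n → ℝ) (hr : ∀ i, ∫ ω, (C i ω)^2 ∂P ≤ r i) :
    ∫ ω, (∑ i, C i ω)^2 ∂P ≤ ∑ i, r i := by
  have hint : ∀ i j : Fin n, Integrable (fun ω => C i ω * C j ω) P := fun i j =>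
    bdd_int' P ((hmeas i).mul (hmeas j)) 1 (fun ω => by
      rw [abs_mul]
      exact mul_le_one₀ (hbdd i ω) (abs_nonneg _) (hbdd j ω))
  have h1 : (fun ω => (∑ i, C i ω)^2) = fun ω => ∑ i, ∑ j, C i ω * C j ω := by
    funext ω; rw [sq, Finset.sum_mul_sum]
  rw [h1, integral_finset_sum _ (fun i _ => integrable_finset_sum _ (fun j _ => hint i j))]
  have h2 : ∀ i : Fin n, ∫ ω, ∑ j, C i ω * C j ω ∂P = ∑ j, ∫ ω, C i ω * C j ω ∂P :=
    fun i => integral_finset_sum _ (fun j _ => hint i j)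
  calc ∑ i, ∫ ω, ∑ j, C i ω * C j ω ∂P
      = ∑ i, ∑ j, ∫ ω, C i ω * C j ω ∂P := Finset.sum_congr rfl (fun i _ => h2 i)
    _ ≤ ∑ i, r i := by
        refine Finset.sum_le_sum fun i _ => ?_
        rw [Finset.sum_eq_single i (fun j _ hji => hcross i j (Ne.symm hji)) (by simp)]
        have h3 : ∀ ω, C i ω * C i ω = (C i ω)^2 := fun ω => (sq _).symm
        simp_rw [h3]
        exact hr i

/-- second moment of binomial-type count deviation -/
lemma M_sq {n : ℕ} (U : Fin n → Ω → ℝ) (hU : ∀ i, Measurable (U i))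
    (hUind : iIndepFun U P)
    (hn q : ℝ) (hq0 : 0 ≤ q) (hq1 : q ≤ 1)
    (hlaw : ∀ i, (P {ω | U i ω ≤ hn}).toReal = q) :
    ∫ ω, (∑ i, ((if U i ω ≤ hn then (1:ℝ) else 0) - q))^2 ∂P ≤ n * q := by
  have hbmeas : ∀ i : Fin n, Measurable (fun ω => if U i ω ≤ hn then (1:ℝ) else 0) := fun i =>
    Measurable.ite ((hU i) measurableSet_Iic) measurable_const measurable_const
  have hCmeas : ∀ i : Fin n, Measurable (fun ω => (if U i ω ≤ hn then (1:ℝ) else 0) - q) :=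
    fun i => (hbmeas i).sub measurable_const
  have hbint : ∀ i : Fin n, Integrable (fun ω => if U i ω ≤ hn then (1:ℝ) else 0) P :=
    fun i => bdd_int' P (hbmeas i) 1 (fun ω => by by_cases h : U i ω ≤ hn <;> simp [h])
  have hCint : ∀ i : Fin n, ∫ ω, ((if U i ω ≤ hn then (1:ℝ) else 0) - q) ∂P = 0 := by
    intro i
    rw [integral_sub (hbint i) (integrable_const q), int_ite' P (hU i), hlaw i, integral_const]
    simp
  have hCabs : ∀ (i : Fin n) ω, |(if U i ω ≤ hn then (1:ℝ) else 0) - q| ≤ 1 := by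
    intro i ω
    by_cases h : U i ω ≤ hn <;> simp only [h, if_true, if_false] <;> rw [abs_le] <;>
      constructor <;> linarith
  have hψ0 : Measurable (fun x : ℝ => (if x ≤ hn then (1:ℝ) else 0) - q) :=
    (Measurable.ite measurableSet_Iic measurable_const measurable_const).sub measurable_const
  have key := sq_sum_le' P (fun i ω => (if U i ω ≤ hn then (1:ℝ) else 0) - q)
    hCmeas hCabs
    (fun i j hij => by
      have hind2 : IndepFun (fun ω => (if U i ω ≤ hn then (1:ℝ) else 0) - q)
          (fun ω => (if U j ω ≤ hn then (1:ℝ) else 0) - q) P :=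
        (hUind.indepFun hij).comp hψ0 hψ0
      rw [hind2.integral_fun_mul_eq_mul_integral (hCmeas i).aestronglyMeasurable (hCmeas j).aestronglyMeasurable,
        hCint i, hCint j, mul_zero])
    (fun _ => q)
    (fun i => by
      have h1 : (fun ω => ((if U i ω ≤ hn then (1:ℝ) else 0) - q)^2)
          = (fun ω => (1 - 2*q) * (if U i ω ≤ hn then (1:ℝ) else 0) + q^2) := by
        funext ω
        by_cases h : U i ω ≤ hn <;> simp only [h, if_true, if_false] <;> ring
      rw [h1, integral_add ((hbint i).const_mul _) (integrable_const _),
        MeasureTheory.integral_const_mul, int_ite' P (hU i), hlaw i, integral_const]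
      simp only [probReal_univ, measure_univ, ENNReal.toReal_one, smul_eq_mul, one_mul]
      nlinarith)
  calc ∫ ω, (∑ i, ((if U i ω ≤ hn then (1:ℝ) else 0) - q))^2 ∂P
      ≤ ∑ _i : Fin n, q := key
    _ = n * q := by rw [Finset.sum_const, Finset.card_univ, Fintype.card_fin, nsmul_eq_mul]

lemma cheb {W : Ω → ℝ} (hW : Measurable W) (C : ℝ) (hC : ∀ ω, |W ω| ≤ C)
    {D a : ℝ} (ha : 0 < a) (hD : ∫ ω, (W ω)^2 ∂P ≤ D) (E : Set Ω)
    (hE : ∀ ω ∈ E, a ≤ |W ω|) : P E ≤ ENNReal.ofReal (D / a^2) := by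
  have hint : Integrable (fun ω => (W ω)^2) P := by
    refine bdd_int' P (hW.pow_const 2) (C^2) (fun ω => ?_)
    rw [abs_pow]
    exact pow_le_pow_left₀ (abs_nonneg _) (hC ω) 2
  have hsub : E ⊆ {ω | a^2 ≤ (W ω)^2} := by
    intro ω hω
    have h1 := hE ω hω
    have h2 : a^2 ≤ |W ω|^2 := pow_le_pow_left₀ ha.le h1 2
    simpa [sq_abs] using h2
  have hm := mul_meas_ge_le_integral_of_nonneg
    (ae_of_all P fun ω => sq_nonneg (W ω)) hint (a^2)
  have ha2 : (0:ℝ) < a^2 := by positivity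
  have h1 : (P {ω | a^2 ≤ (W ω)^2}).toReal ≤ D / a^2 := by
    rw [le_div_iff₀ ha2]
    nlinarith [hm, show P.real {ω | a^2 ≤ (W ω)^2} = (P {ω | a^2 ≤ (W ω)^2}).toReal from rfl]
  calc P E ≤ P {ω | a^2 ≤ (W ω)^2} := measure_mono hsub
    _ = ENNReal.ofReal ((P {ω | a^2 ≤ (W ω)^2}).toReal) :=
        (ENNReal.ofReal_toReal (measure_ne_top P _)).symm
    _ ≤ ENNReal.ofReal (D / a^2) := ENNReal.ofReal_le_ofReal h1

lemma event_bound {W N : Ω → ℝ} (hW : Measurable W) (C : ℝ)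
    (hC : ∀ ω, |W ω| ≤ C) (hN0 : ∀ ω, 0 ≤ N ω)
    {D : ℝ} (hD : ∫ ω, (W ω)^2 ∂P ≤ D)
    (ε m : ℝ) (hε : 0 < ε) (hm : 0 < m)
    (E : Set Ω) (hE : ∀ ω ∈ E, ε * N ω ≤ |W ω|) :
    P E ≤ ENNReal.ofReal (D / (ε*m)^2) + P {ω | N ω < m} := by
  have hsub : E ⊆ {ω | ε*m ≤ |W ω|} ∪ {ω | N ω < m} := by
    intro ω hω
    by_cases h : N ω < m
    · exact Or.inr h
    · push_neg at h
      refine Or.inl (le_trans ?_ (hE ω hω))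
      exact mul_le_mul_of_nonneg_left h hε.le
  calc P E ≤ P ({ω | ε*m ≤ |W ω|} ∪ {ω | N ω < m}) := measure_mono hsub
    _ ≤ P {ω | ε*m ≤ |W ω|} + P {ω | N ω < m} := measure_union_le _ _
    _ ≤ _ := add_le_add_left
        (cheb P hW C hC (mul_pos hε hm) hD _ (fun ω hω => hω)) _

lemma card_eq_sum {n : ℕ} (p : Fin n → Prop) [DecidablePred p] :
    ((Finset.univ.filter p).card : ℝ) = ∑ i, if p i then (1:ℝ) else 0 := by
  rw [Finset.card_filter, Nat.cast_sum]
  exact Finset.sum_congr rfl fun i _ => by split <;> simp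

/-- second moment bound for W -/
lemma W_sq {n : ℕ} (X ξ : Fin n → Ω → ℝ)
    (hX : ∀ i, Measurable (X i)) (hξ : ∀ i, Measurable (ξ i))
    (hξind : iIndepFun ξ P)
    (hindep : NoiseIndepDesign P n X ξ)
    (hn t p : ℝ) (hp0 : 0 ≤ p) (hp1 : p ≤ 1)
    (hlaw : ∀ i, (P {ω | ξ i ω ≤ t}).toReal = p) :
    ∫ ω, (∑ i, (if X i ω ≤ hn then (1:ℝ) else 0) *
        ((if ξ i ω ≤ t then (1:ℝ) else 0) - p))^2 ∂P
      ≤ ∑ i, (P {ω | X i ω ≤ hn}).toReal := by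
  have hameas : ∀ i : Fin n, Measurable (fun ω => if X i ω ≤ hn then (1:ℝ) else 0) := fun i =>
    Measurable.ite ((hX i) measurableSet_Iic) measurable_const measurable_const
  have hbmeas : ∀ i : Fin n, Measurable (fun ω => if ξ i ω ≤ t then (1:ℝ) else 0) := fun i =>
    Measurable.ite ((hξ i) measurableSet_Iic) measurable_const measurable_const
  have hBmeas : ∀ i : Fin n, Measurable (fun ω => (if ξ i ω ≤ t then (1:ℝ) else 0) - p) :=
    fun i => (hbmeas i).sub measurable_const
  have habs : ∀ (i : Fin n) ω, |(if X i ω ≤ hn then (1:ℝ) else 0)| ≤ 1 := by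
    intro i ω; by_cases h : X i ω ≤ hn <;> simp [h]
  have hanneg : ∀ (i : Fin n) ω, (0:ℝ) ≤ (if X i ω ≤ hn then (1:ℝ) else 0) := by
    intro i ω; by_cases h : X i ω ≤ hn <;> simp [h]
  have hBabs : ∀ (i : Fin n) ω, |(if ξ i ω ≤ t then (1:ℝ) else 0) - p| ≤ 1 := by
    intro i ω
    by_cases h : ξ i ω ≤ t <;> simp only [h, if_true, if_false] <;> rw [abs_le] <;>
      constructor <;> linarith
  -- integral of B is zero
  have hbint : ∀ i : Fin n, Integrable (fun ω => if ξ i ω ≤ t then (1:ℝ) else 0) P :=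
    fun i => bdd_int' P (hbmeas i) 1 (fun ω => by by_cases h : ξ i ω ≤ t <;> simp [h])
  have hBint : ∀ i : Fin n, ∫ ω, ((if ξ i ω ≤ t then (1:ℝ) else 0) - p) ∂P = 0 := by
    intro i
    rw [integral_sub (hbint i) (integrable_const p), int_ite' P (hξ i), hlaw i, integral_const]
    simp
  -- independence of products of a's vs products of B's
  have hφmeas : ∀ i j : Fin n, Measurable (fun v : Fin n → ℝ =>
      (if v i ≤ hn then (1:ℝ) else 0) * (if v j ≤ hn then (1:ℝ) else 0)) := by
    intro i j
    exact Measurable.mul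
      (Measurable.ite ((measurable_pi_apply i) measurableSet_Iic) measurable_const
        measurable_const)
      (Measurable.ite ((measurable_pi_apply j) measurableSet_Iic) measurable_const
        measurable_const)
  have hψ1meas : ∀ i : Fin n, Measurable (fun v : Fin n → ℝ =>
      ((if v i ≤ t then (1:ℝ) else 0) - p)) := fun i =>
    (Measurable.ite ((measurable_pi_apply i) measurableSet_Iic) measurable_const
      measurable_const).sub measurable_const
  have hψmeas : ∀ i j : Fin n, Measurable (fun v : Fin n → ℝ =>
      ((if v i ≤ t then (1:ℝ) else 0) - p) * ((if v j ≤ t then (1:ℝ) else 0) - p)) :=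
    fun i j => (hψ1meas i).mul (hψ1meas j)
  have hindAB : ∀ i j : Fin n, IndepFun
      (fun ω => (if X i ω ≤ hn then (1:ℝ) else 0) * (if X j ω ≤ hn then (1:ℝ) else 0))
      (fun ω => ((if ξ i ω ≤ t then (1:ℝ) else 0) - p) * ((if ξ j ω ≤ t then (1:ℝ) else 0) - p))
      P := fun i j => hindep.comp (hφmeas i j) (hψmeas i j)
  have hψ0meas : Measurable (fun x : ℝ => (if x ≤ t then (1:ℝ) else 0) - p) :=
    (Measurable.ite measurableSet_Iic measurable_const measurable_const).sub measurable_const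
  -- apply sq_sum_le'
  refine sq_sum_le' P _ (fun i => ((hameas i).fun_mul (hBmeas i)))
    (fun i ω => by
      rw [abs_mul]
      exact mul_le_one₀ (habs i ω) (abs_nonneg _) (hBabs i ω))
    ?_ _ ?_
  · -- cross terms
    intro i j hij
    have hBij : ∫ ω, ((if ξ i ω ≤ t then (1:ℝ) else 0) - p)
        * ((if ξ j ω ≤ t then (1:ℝ) else 0) - p) ∂P = 0 := by
      have hind2 : IndepFun (fun ω => (if ξ i ω ≤ t then (1:ℝ) else 0) - p)
          (fun ω => (if ξ j ω ≤ t then (1:ℝ) else 0) - p) P :=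
        (hξind.indepFun hij).comp hψ0meas hψ0meas
      rw [hind2.integral_fun_mul_eq_mul_integral (hBmeas i).aestronglyMeasurable (hBmeas j).aestronglyMeasurable,
        hBint i, hBint j, mul_zero]
    have h1 : (fun ω => ((if X i ω ≤ hn then (1:ℝ) else 0) * ((if ξ i ω ≤ t then (1:ℝ) else 0) - p))
        * ((if X j ω ≤ hn then (1:ℝ) else 0) * ((if ξ j ω ≤ t then (1:ℝ) else 0) - p)))
        = (fun ω => ((if X i ω ≤ hn then (1:ℝ) else 0) * (if X j ω ≤ hn then (1:ℝ) else 0))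
          * (((if ξ i ω ≤ t then (1:ℝ) else 0) - p) * ((if ξ j ω ≤ t then (1:ℝ) else 0) - p))) := by
      funext ω; ring
    calc ∫ ω, ((if X i ω ≤ hn then (1:ℝ) else 0) * ((if ξ i ω ≤ t then (1:ℝ) else 0) - p))
        * ((if X j ω ≤ hn then (1:ℝ) else 0) * ((if ξ j ω ≤ t then (1:ℝ) else 0) - p)) ∂P
        = ∫ ω, ((if X i ω ≤ hn then (1:ℝ) else 0) * (if X j ω ≤ hn then (1:ℝ) else 0))
          * (((if ξ i ω ≤ t then (1:ℝ) else 0) - p) * ((if ξ j ω ≤ t then (1:ℝ) else 0) - p)) ∂P := by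
            rw [h1]
      _ = 0 := by
            rw [(hindAB i j).integral_fun_mul_eq_mul_integral ((hameas i).mul (hameas j)).aestronglyMeasurable
              ((hBmeas i).mul (hBmeas j)).aestronglyMeasurable, hBij, mul_zero]
  · -- diagonal terms
    intro i
    have h1 : (fun ω => ((if X i ω ≤ hn then (1:ℝ) else 0)
        * ((if ξ i ω ≤ t then (1:ℝ) else 0) - p))^2)
        = (fun ω => (if X i ω ≤ hn then (1:ℝ) else 0)
          * ((if ξ i ω ≤ t then (1:ℝ) else 0) - p)^2) := by
      funext ω
      by_cases h : X i ω ≤ hn <;> simp [h] <;> ring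
    have hindaB2 : IndepFun (fun ω => (if X i ω ≤ hn then (1:ℝ) else 0))
        (fun ω => ((if ξ i ω ≤ t then (1:ℝ) else 0) - p)^2) P := by
      refine hindep.comp (φ := fun v : Fin n → ℝ => if v i ≤ hn then (1:ℝ) else 0)
        (ψ := fun v : Fin n → ℝ => ((if v i ≤ t then (1:ℝ) else 0) - p)^2)
        (Measurable.ite ((measurable_pi_apply i) measurableSet_Iic) measurable_const
          measurable_const) ((hψ1meas i).pow_const 2)
    have hB2int : Integrable (fun ω => ((if ξ i ω ≤ t then (1:ℝ) else 0) - p)^2) P := by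
      refine bdd_int' P ((hBmeas i).pow_const 2) 1 (fun ω => ?_)
      rw [abs_pow]
      calc |(if ξ i ω ≤ t then (1:ℝ) else 0) - p|^2 ≤ 1^2 :=
            pow_le_pow_left₀ (abs_nonneg _) (hBabs i ω) 2
        _ = 1 := one_pow 2
    have hB2le : ∫ ω, ((if ξ i ω ≤ t then (1:ℝ) else 0) - p)^2 ∂P ≤ 1 := by
      calc ∫ ω, ((if ξ i ω ≤ t then (1:ℝ) else 0) - p)^2 ∂P
          ≤ ∫ _ω, (1:ℝ) ∂P := by
            refine integral_mono hB2int (integrable_const 1) (fun ω => ?_)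
            calc ((if ξ i ω ≤ t then (1:ℝ) else 0) - p)^2
                = |(if ξ i ω ≤ t then (1:ℝ) else 0) - p|^2 := (sq_abs _).symm
              _ ≤ 1^2 := pow_le_pow_left₀ (abs_nonneg _) (hBabs i ω) 2
              _ = 1 := one_pow 2
        _ = 1 := by simp
    rw [h1, hindaB2.integral_fun_mul_eq_mul_integral (hameas i).aestronglyMeasurable hB2int.aestronglyMeasurable,
      int_ite' P (hX i)]
    have hnn : (0:ℝ) ≤ (P {ω | X i ω ≤ hn}).toReal := ENNReal.toReal_nonneg
    exact mul_le_of_le_one_right hnn hB2le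

/-- Master per-n bound. -/
lemma master {Ω : Type} [MeasurableSpace Ω] (P : Measure Ω) [IsProbabilityMeasure P]
    {n : ℕ} (X ξ : Fin n → Ω → ℝ)
    (hX : ∀ i, Measurable (X i)) (hξ : ∀ i, Measurable (ξ i))
    (hξind : iIndepFun ξ P)
    (hindep : NoiseIndepDesign P n X ξ)
    (hn : ℝ)
    (c p₀ p₁ : ℝ)
    (hp₀0 : 0 ≤ p₀) (hp₁1 : p₁ ≤ 1) (hc1 : p₀ < c) (hc2 : c < p₁)
    (hlaw₀ : ∀ i, (P {ω | ξ i ω ≤ -(1:ℝ)/2}).toReal = p₀)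
    (hlaw₁ : ∀ i, (P {ω | ξ i ω ≤ (1:ℝ)/2}).toReal = p₁)
    (m : ℝ) (hm : 0 < m)
    (G : Set Ω) (hG : ∀ ω ∈ G, ∀ i, 0 ≤ X i ω) :
    P {ω | ((Finset.univ.filter fun i : Fin n => X i ω ≤ hn ∧ ξ i ω ≤ 1/2).card : ℝ)
          ≤ c * ((Finset.univ.filter fun i : Fin n => X i ω ≤ hn).card : ℝ)}
      + (⨆ (θ : ℝ) (_ : θ ∈ Set.Icc (0:ℝ) 1 ∧ hn ≤ θ),
        P {ω | ¬ (((Finset.univ.filter fun i : Fin n =>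
              X i ω ≤ hn ∧ obsY X ξ 0 θ i ω ≤ 1/2).card : ℝ)
            ≤ c * ((Finset.univ.filter fun i : Fin n => X i ω ≤ hn).card : ℝ))})
      ≤ (ENNReal.ofReal ((∑ i, (P {ω | X i ω ≤ hn}).toReal) / ((p₁ - c)*m)^2)
          + P {ω | (∑ i, (if X i ω ≤ hn then (1:ℝ) else 0)) < m})
        + (ENNReal.ofReal ((∑ i, (P {ω | X i ω ≤ hn}).toReal) / ((c - p₀)*m)^2)
          + (P {ω | (∑ i, (if X i ω ≤ hn then (1:ℝ) else 0)) < m} + P Gᶜ)) := by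
  have hp₀1 : p₀ ≤ 1 := le_trans (le_of_lt (lt_trans hc1 hc2)) hp₁1
  have hp₁0 : 0 ≤ p₁ := le_trans hp₀0 (le_of_lt (lt_trans hc1 hc2))
  set N : Ω → ℝ := fun ω => ∑ i, (if X i ω ≤ hn then (1:ℝ) else 0) with hN
  have hN0 : ∀ ω, 0 ≤ N ω := fun ω =>
    Finset.sum_nonneg fun i _ => by by_cases h : X i ω ≤ hn <;> simp [h]
  have hNcard : ∀ ω, ((Finset.univ.filter fun i : Fin n => X i ω ≤ hn).card : ℝ) = N ω :=
    fun ω => card_eq_sum _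
  have hmeasW : ∀ t p : ℝ, Measurable (fun ω =>
      ∑ i, (if X i ω ≤ hn then (1:ℝ) else 0) * ((if ξ i ω ≤ t then (1:ℝ) else 0) - p)) := by
    intro t p
    refine Finset.measurable_sum _ fun i _ => Measurable.mul ?_ (Measurable.sub ?_ measurable_const)
    · exact Measurable.ite ((hX i) measurableSet_Iic) measurable_const measurable_const
    · exact Measurable.ite ((hξ i) measurableSet_Iic) measurable_const measurable_const
  have habsW : ∀ t p : ℝ, 0 ≤ p → p ≤ 1 → ∀ ω, |(∑ i, (if X i ω ≤ hn then (1:ℝ) else 0)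
      * ((if ξ i ω ≤ t then (1:ℝ) else 0) - p))| ≤ (n:ℝ) := by
    intro t p hp0 hp1 ω
    calc |(∑ i, (if X i ω ≤ hn then (1:ℝ) else 0) * ((if ξ i ω ≤ t then (1:ℝ) else 0) - p))|
        ≤ ∑ i, |(if X i ω ≤ hn then (1:ℝ) else 0) * ((if ξ i ω ≤ t then (1:ℝ) else 0) - p)| :=
          Finset.abs_sum_le_sum_abs _ _
      _ ≤ ∑ _i : Fin n, (1:ℝ) := by
          refine Finset.sum_le_sum fun i _ => ?_
          rw [abs_mul]
          refine mul_le_one₀ ?_ (abs_nonneg _) ?_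
          · by_cases h : X i ω ≤ hn <;> simp [h]
          · by_cases h : ξ i ω ≤ t <;> simp only [h, if_true, if_false] <;> rw [abs_le] <;>
              constructor <;> linarith
      _ = (n:ℝ) := by simp
  -- decomposition of W as S - p * N
  have hWdec : ∀ (t p : ℝ) ω, (∑ i, (if X i ω ≤ hn then (1:ℝ) else 0)
      * ((if ξ i ω ≤ t then (1:ℝ) else 0) - p))
      = (∑ i, (if X i ω ≤ hn then (1:ℝ) else 0) * (if ξ i ω ≤ t then (1:ℝ) else 0)) - p * N ω := by
    intro t p ω
    rw [hN, Finset.mul_sum, ← Finset.sum_sub_distrib]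
    exact Finset.sum_congr rfl fun i _ => by ring
  -- type I bound
  have hb1 : P {ω | ((Finset.univ.filter fun i : Fin n => X i ω ≤ hn ∧ ξ i ω ≤ 1/2).card : ℝ)
          ≤ c * ((Finset.univ.filter fun i : Fin n => X i ω ≤ hn).card : ℝ)}
      ≤ ENNReal.ofReal ((∑ i, (P {ω | X i ω ≤ hn}).toReal) / ((p₁ - c)*m)^2)
          + P {ω | N ω < m} := by
    refine event_bound P (hmeasW (1/2) p₁) (n:ℝ) (habsW (1/2) p₁ hp₁0 hp₁1) hN0
      (W_sq P X ξ hX hξ hξind hindep hn (1/2) p₁ hp₁0 hp₁1 (by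
        intro i
        have := hlaw₁ i
        norm_num at this ⊢
        exact this)) (p₁ - c) m (by linarith) hm _ ?_
    intro ω hω
    rw [Set.mem_setOf_eq] at hω
    have hS : ((Finset.univ.filter fun i : Fin n => X i ω ≤ hn ∧ ξ i ω ≤ 1/2).card : ℝ)
        = ∑ i, (if X i ω ≤ hn then (1:ℝ) else 0) * (if ξ i ω ≤ (1:ℝ)/2 then (1:ℝ) else 0) := by
      rw [card_eq_sum]
      refine Finset.sum_congr rfl fun i _ => ?_
      by_cases h1 : X i ω ≤ hn <;> by_cases h2 : ξ i ω ≤ (1:ℝ)/2 <;>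
        norm_num [h1, h2]
    rw [hNcard ω] at hω
    rw [hS] at hω
    have hW := hWdec (1/2) p₁ ω
    have hle : (∑ i, (if X i ω ≤ hn then (1:ℝ) else 0)
        * ((if ξ i ω ≤ (1:ℝ)/2 then (1:ℝ) else 0) - p₁)) ≤ -((p₁ - c) * N ω) := by
      rw [hW]
      have := hN0 ω
      nlinarith
    have h2 : (p₁ - c) * N ω ≤ -(∑ i, (if X i ω ≤ hn then (1:ℝ) else 0)
        * ((if ξ i ω ≤ (1:ℝ)/2 then (1:ℝ) else 0) - p₁)) := by linarith
    exact le_trans h2 (neg_le_abs _)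
  -- type II bound, for fixed θ
  have hb2 : ∀ θ : ℝ, θ ∈ Set.Icc (0:ℝ) 1 ∧ hn ≤ θ →
      P {ω | ¬ (((Finset.univ.filter fun i : Fin n =>
              X i ω ≤ hn ∧ obsY X ξ 0 θ i ω ≤ 1/2).card : ℝ)
            ≤ c * ((Finset.univ.filter fun i : Fin n => X i ω ≤ hn).card : ℝ))}
      ≤ ENNReal.ofReal ((∑ i, (P {ω | X i ω ≤ hn}).toReal) / ((c - p₀)*m)^2)
          + (P {ω | N ω < m} + P Gᶜ) := by
    intro θ hθ
    set E := {ω | ¬ (((Finset.univ.filter fun i : Fin n =>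
              X i ω ≤ hn ∧ obsY X ξ 0 θ i ω ≤ 1/2).card : ℝ)
            ≤ c * ((Finset.univ.filter fun i : Fin n => X i ω ≤ hn).card : ℝ))} with hE
    have hsub : E ⊆ (E ∩ G) ∪ Gᶜ := by
      intro ω hω
      by_cases h : ω ∈ G
      · exact Or.inl ⟨hω, h⟩
      · exact Or.inr h
    have hEG : P (E ∩ G) ≤ ENNReal.ofReal ((∑ i, (P {ω | X i ω ≤ hn}).toReal)
        / ((c - p₀)*m)^2) + P {ω | N ω < m} := by
      refine event_bound P (hmeasW (-(1:ℝ)/2) p₀) (n:ℝ) (habsW (-(1:ℝ)/2) p₀ hp₀0 hp₀1) hN0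
        (W_sq P X ξ hX hξ hξind hindep hn (-(1:ℝ)/2) p₀ hp₀0 hp₀1 hlaw₀)
        (c - p₀) m (by linarith) hm _ ?_
      rintro ω ⟨hω, hωG⟩
      rw [hE, Set.mem_setOf_eq] at hω
      push_neg at hω
      -- rewrite the filter using ξ
      have hfilt : (Finset.univ.filter fun i : Fin n =>
            X i ω ≤ hn ∧ obsY X ξ 0 θ i ω ≤ 1/2)
          = (Finset.univ.filter fun i : Fin n => X i ω ≤ hn ∧ ξ i ω ≤ -(1:ℝ)/2) := by
        refine Finset.filter_congr fun i _ => ?_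
        by_cases h1 : X i ω ≤ hn
        · have hmem : X i ω ∈ Set.Icc (0:ℝ) θ := ⟨hG ω hωG i, le_trans h1 hθ.2⟩
          have hobs : obsY X ξ 0 θ i ω = 1 + ξ i ω := by
            rw [obsY, if_pos hmem]
          rw [hobs]
          constructor
          · rintro ⟨_, h2⟩; exact ⟨h1, by linarith⟩
          · rintro ⟨_, h2⟩; exact ⟨h1, by linarith⟩
        · constructor
          · rintro ⟨h2, _⟩; exact absurd h2 h1
          · rintro ⟨h2, _⟩; exact absurd h2 h1
      rw [hfilt] at hω
      have hS : ((Finset.univ.filter fun i : Fin n => X i ω ≤ hn ∧ ξ i ω ≤ -(1:ℝ)/2).card : ℝ)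
          = ∑ i, (if X i ω ≤ hn then (1:ℝ) else 0) * (if ξ i ω ≤ -(1:ℝ)/2 then (1:ℝ) else 0) := by
        rw [card_eq_sum]
        refine Finset.sum_congr rfl fun i _ => ?_
        by_cases h1 : X i ω ≤ hn <;> by_cases h2 : ξ i ω ≤ -(1:ℝ)/2 <;>
          norm_num [h1, h2]
      rw [hNcard ω, hS] at hω
      have hW := hWdec (-(1:ℝ)/2) p₀ ω
      have hge : (c - p₀) * N ω ≤ (∑ i, (if X i ω ≤ hn then (1:ℝ) else 0)
          * ((if ξ i ω ≤ -(1:ℝ)/2 then (1:ℝ) else 0) - p₀)) := by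
        rw [hW]
        nlinarith [hN0 ω]
      exact le_trans hge (le_abs_self _)
    calc P E ≤ P ((E ∩ G) ∪ Gᶜ) := measure_mono hsub
      _ ≤ P (E ∩ G) + P Gᶜ := measure_union_le _ _
      _ ≤ (ENNReal.ofReal ((∑ i, (P {ω | X i ω ≤ hn}).toReal) / ((c - p₀)*m)^2)
            + P {ω | N ω < m}) + P Gᶜ := add_le_add_left hEG _
      _ = _ := by rw [add_assoc]
  exact add_le_add hb1 (iSup₂_le hb2)


lemma div_id1 (eps t : ℝ) (heps : eps ≠ 0) : t/(eps*t)^2 = (1/eps^2)/t := by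
  by_cases ht : t = 0
  · simp [ht]
  · field_simp

lemma div_id2 (eps t : ℝ) (heps : eps ≠ 0) (ht : t ≠ 0) :
    t/(eps*(t/2))^2 = (4/eps^2)/t := by
  field_simp
  ring

lemma ofReal_div_tendsto (c' : ℝ) {t : ℕ → ℝ} (ht : Tendsto t atTop atTop) :
    Tendsto (fun n => ENNReal.ofReal (c' / t n)) atTop (𝓝 0) := by
  have h0 : Tendsto (fun n => c' / t n) atTop (𝓝 0) :=
    Tendsto.div_atTop tendsto_const_nhds ht
  simpa using ENNReal.tendsto_ofReal h0

end MyHelpers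

set_option maxHeartbeats 1000000 in
/-- consistency of the test `T_n^0 = 1(S ≤ cN)` on the class `S₀`,
when `n·h_n → ∞`, for designs (DD) or (RD). -/
theorem stmt0
    (σ : ℝ) (hσ : 0 < σ)
    -- common law of the noise
    (ν : Measure ℝ) (hνprob : IsProbabilityMeasure ν)
    (hsub : ∀ u : ℝ, ∫ x, Real.exp (u * x) ∂ν ≤ Real.exp (σ^2 * u^2 / 2))
    (hν : ν (Set.Iic (-(1:ℝ)/2)) < ν (Set.Iic ((1:ℝ)/2)))
    -- the calibrating constant c
    (c : ℝ)
    (hc1 : (ν (Set.Iic (-(1:ℝ)/2))).toReal < c)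
    (hc2 : c < (ν (Set.Iic ((1:ℝ)/2))).toReal)
    -- the detection threshold
    (h : ℕ → ℝ) (hh : ∀ n, 0 < h n)
    (hnh : Tendsto (fun n : ℕ => (n : ℝ) * h n) atTop atTop)
    -- the model, for each sample size n
    (Ω : ℕ → Type) (mΩ : ∀ n, MeasurableSpace (Ω n))
    (P : ∀ n, Measure (Ω n)) (hP : ∀ n, IsProbabilityMeasure (P n))
    (X ξ : ∀ n, Fin n → Ω n → ℝ)
    (hξmeas : ∀ n i, Measurable (ξ n i))
    (hξindep : ∀ n, iIndepFun (ξ n) (P n))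
    (hξlaw : ∀ n i, Measure.map (ξ n i) (P n) = ν)
    (hdesign : (∀ n, IsDD n (X n)) ∨ (∀ n, IsRD (P n) n (X n)))
    (hindep : ∀ n, NoiseIndepDesign (P n) n (X n) (ξ n)) :
    Tendsto (fun n : ℕ =>
      -- type I error: under G = ∅ (so Yᵢ = ξᵢ), the test accepts H₁, i.e. S ≤ cN
      (P n) {ω | ((Finset.univ.filter fun i : Fin n =>
              X n i ω ≤ h n ∧ ξ n i ω ≤ 1/2).card : ℝ)
            ≤ c * ((Finset.univ.filter fun i : Fin n => X n i ω ≤ h n).card : ℝ)}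
      -- type II error: sup over G = [0,θ] ∈ S₀ with |G| ≥ h n
      + ⨆ (θ : ℝ) (_ : θ ∈ Set.Icc (0:ℝ) 1 ∧ h n ≤ θ),
        (P n) {ω | ¬ (((Finset.univ.filter fun i : Fin n =>
              X n i ω ≤ h n ∧ obsY (X n) (ξ n) 0 θ i ω ≤ 1/2).card : ℝ)
            ≤ c * ((Finset.univ.filter fun i : Fin n => X n i ω ≤ h n).card : ℝ))})
      atTop (𝓝 0) := by
  classical
  have hp₀0 : 0 ≤ (ν (Set.Iic (-(1:ℝ)/2))).toReal := ENNReal.toReal_nonneg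
  have hp₁1 : (ν (Set.Iic ((1:ℝ)/2))).toReal ≤ 1 := by
    have h1 : ν (Set.Iic ((1:ℝ)/2)) ≤ 1 := prob_le_one
    calc (ν (Set.Iic ((1:ℝ)/2))).toReal ≤ (1 : ℝ≥0∞).toReal :=
          ENNReal.toReal_mono ENNReal.one_ne_top h1
      _ = 1 := by simp
  have hplaw : ∀ (n : ℕ) (i : Fin n) (t : ℝ),
      ((P n) {ω | ξ n i ω ≤ t}).toReal = (ν (Set.Iic t)).toReal := by
    intro n i t
    rw [← hξlaw n i, Measure.map_apply (hξmeas n i) measurableSet_Iic]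
    rfl
  set p₀ := (ν (Set.Iic (-(1:ℝ)/2))).toReal with hp₀def
  set p₁ := (ν (Set.Iic ((1:ℝ)/2))).toReal with hp₁def
  have heps1 : (0:ℝ) < p₁ - c := by linarith
  have heps2 : (0:ℝ) < c - p₀ := by linarith
  rcases hdesign with hdd | hrd
  · -- deterministic design
    obtain ⟨K, hK⟩ : ∃ K : ℕ → ℕ, ∀ n, K n =
        (Finset.univ.filter fun i : Fin n => (((i:ℕ):ℝ)+1)/(n:ℝ) ≤ h n).card :=
      ⟨_, fun n => rfl⟩
    have hKtend : Tendsto K atTop atTop := by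
      rw [tendsto_atTop]
      intro b
      rcases Nat.eq_zero_or_pos b with hb | hb
      · exact Eventually.of_forall fun n => hb ▸ Nat.zero_le _
      filter_upwards [hnh.eventually_ge_atTop (b:ℝ), eventually_ge_atTop b] with n h1 h2
      have hn0 : (0:ℝ) < (n:ℝ) := by
        have : 0 < n := lt_of_lt_of_le hb h2
        exact_mod_cast this
      rw [hK n]
      have : (Finset.univ : Finset (Fin b)).card
          ≤ (Finset.univ.filter fun i : Fin n => (((i:ℕ):ℝ)+1)/(n:ℝ) ≤ h n).card := by
        refine Finset.card_le_card_of_injOn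
          (fun j : Fin b => (⟨j.1, lt_of_lt_of_le j.2 h2⟩ : Fin n)) ?_ ?_
        · intro j _
          rw [Finset.mem_coe, Finset.mem_filter]
          refine ⟨Finset.mem_univ _, ?_⟩
          rw [div_le_iff₀ hn0]
          have hj : ((j:ℕ):ℝ) + 1 ≤ (b:ℝ) := by exact_mod_cast j.2
          calc ((j:ℕ):ℝ) + 1 ≤ (b:ℝ) := hj
            _ ≤ (n:ℝ) * h n := h1
            _ = h n * (n:ℝ) := mul_comm _ _
        · intro x _ y _ hxy
          simpa [Fin.ext_iff] using hxy
      simpa using this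
    have hXm : ∀ (n : ℕ) (i : Fin n), Measurable (X n i) := by
      intro n i
      have hXeq : X n i = fun _ => (((i:ℕ):ℝ)+1)/(n:ℝ) := funext fun ω => hdd n i ω
      rw [hXeq]
      exact measurable_const
    -- bounding sequence
    have hKr : Tendsto (fun n => (K n : ℝ)) atTop atTop :=
      tendsto_natCast_atTop_atTop.comp hKtend
    have hg0 : Tendsto (fun n => ENNReal.ofReal ((1/(p₁-c)^2)/(K n : ℝ))
        + ENNReal.ofReal ((1/(c-p₀)^2)/(K n : ℝ))) atTop (𝓝 0) := by
      have h1 := ofReal_div_tendsto (1/(p₁-c)^2) hKr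
      have h2 := ofReal_div_tendsto (1/(c-p₀)^2) hKr
      have h3 := Tendsto.add h1 h2
      rw [add_zero] at h3
      exact h3
    refine tendsto_of_tendsto_of_tendsto_of_le_of_le' tendsto_const_nhds hg0
      (Eventually.of_forall fun n => zero_le) ?_
    filter_upwards [hKtend.eventually_ge_atTop 1] with n hK1
    haveI := hP n
    have hKpos : (0:ℝ) < (K n : ℝ) := by exact_mod_cast hK1
    -- compute D and N
    have hDsum : (∑ i : Fin n, ((P n) {ω | X n i ω ≤ h n}).toReal) = (K n : ℝ) := by
      have h1 : ∀ i : Fin n, ((P n) {ω | X n i ω ≤ h n}).toReal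
          = if (((i:ℕ):ℝ)+1)/(n:ℝ) ≤ h n then (1:ℝ) else 0 := by
        intro i
        by_cases hi : (((i:ℕ):ℝ)+1)/(n:ℝ) ≤ h n
        · have : {ω | X n i ω ≤ h n} = Set.univ := by
            ext ω; simp [hdd n i ω, hi]
          rw [this, if_pos hi]
          simp
        · have : {ω | X n i ω ≤ h n} = ∅ := by
            ext ω; simp [hdd n i ω, hi]
          rw [this, if_neg hi]
          simp
      rw [Finset.sum_congr rfl fun i _ => h1 i, hK n]
      exact (card_eq_sum _).symm
    have hNconst : ∀ ω, (∑ i : Fin n, (if X n i ω ≤ h n then (1:ℝ) else 0)) = (K n : ℝ) := by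
      intro ω
      calc (∑ i : Fin n, (if X n i ω ≤ h n then (1:ℝ) else 0))
          = ∑ i : Fin n, (if (((i:ℕ):ℝ)+1)/(n:ℝ) ≤ h n then (1:ℝ) else 0) :=
            Finset.sum_congr rfl fun i _ => by rw [hdd n i ω]
        _ = (K n : ℝ) := by rw [hK n]; exact (card_eq_sum _).symm
    have hNset : {ω | (∑ i : Fin n, (if X n i ω ≤ h n then (1:ℝ) else 0)) < (K n : ℝ)} = ∅ := by
      ext ω
      simp only [Set.mem_setOf_eq, hNconst ω, lt_self_iff_false, Set.mem_empty_iff_false]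
    have hmaster := master (P n) (X n) (ξ n) (hXm n) (hξmeas n) (hξindep n) (hindep n)
      (h n) c p₀ p₁ hp₀0 hp₁1 hc1 hc2
      (fun i => hplaw n i (-(1:ℝ)/2)) (fun i => hplaw n i ((1:ℝ)/2))
      ((K n : ℝ)) hKpos Set.univ (fun ω _ i => by
        rw [hdd n i ω]
        positivity)
    refine le_trans hmaster ?_
    rw [hNset, hDsum]
    simp only [measure_empty, Set.compl_univ, add_zero, zero_add]
    have he1 : (K n : ℝ) / ((p₁ - c) * (K n : ℝ))^2 = (1/(p₁-c)^2)/(K n : ℝ) :=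
      div_id1 _ _ (ne_of_gt heps1)
    have he2 : (K n : ℝ) / ((c - p₀) * (K n : ℝ))^2 = (1/(c-p₀)^2)/(K n : ℝ) :=
      div_id1 _ _ (ne_of_gt heps2)
    rw [he1, he2]
  · -- random design
    have ht : Tendsto (fun n : ℕ => (n:ℝ) * min (h n) 1) atTop atTop := by
      rw [tendsto_atTop]
      intro b
      filter_upwards [hnh.eventually_ge_atTop b,
        tendsto_natCast_atTop_atTop.eventually_ge_atTop b] with n h1 h2
      rcases le_total (h n) 1 with hm | hm
      · rw [min_eq_left hm]; exact h1
      · rw [min_eq_right hm]; simpa using h2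
    have hg0 : Tendsto (fun n : ℕ => ENNReal.ofReal ((4/(p₁-c)^2)/((n:ℝ)*min (h n) 1))
        + ENNReal.ofReal ((4/(c-p₀)^2)/((n:ℝ)*min (h n) 1))
        + (ENNReal.ofReal (4/((n:ℝ)*min (h n) 1)) + ENNReal.ofReal (4/((n:ℝ)*min (h n) 1))))
        atTop (𝓝 0) := by
      have h1 := ofReal_div_tendsto (4/(p₁-c)^2) ht
      have h2 := ofReal_div_tendsto (4/(c-p₀)^2) ht
      have h3 := ofReal_div_tendsto 4 ht
      have h4 := (h1.add h2).add (h3.add h3)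
      simp only [add_zero] at h4
      exact h4
    refine tendsto_of_tendsto_of_tendsto_of_le_of_le' tendsto_const_nhds hg0
      (Eventually.of_forall fun n => zero_le) ?_
    filter_upwards [ht.eventually_ge_atTop 1] with n ht1
    haveI := hP n
    obtain ⟨hXm, hmono, U, hUm, hUind, hUlaw, hperm⟩ := hrd n
    set q := min (h n) 1 with hqdef
    set t := (n:ℝ) * q with htdef
    have hq0 : (0:ℝ) < q := lt_min (hh n) one_pos
    have hqle : q ≤ 1 := min_le_right _ _
    have htpos : (0:ℝ) < t := lt_of_lt_of_le one_pos ht1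
    have htne : t ≠ 0 := ne_of_gt htpos
    have hm2 : (0:ℝ) < t/2 := by linarith
    have hUq : ∀ i, ((P n) {ω | U i ω ≤ h n}).toReal = q := by
      intro i
      have hset : {ω | U i ω ≤ h n} = U i ⁻¹' (Set.Iic (h n)) := rfl
      rw [hset, ← Measure.map_apply (hUm i) measurableSet_Iic, hUlaw i,
        Measure.restrict_apply measurableSet_Iic]
      have hiset : Set.Iic (h n) ∩ Set.Icc 0 1 = Set.Icc (0:ℝ) q := by
        ext x
        simp only [Set.mem_inter_iff, Set.mem_Iic, Set.mem_Icc, hqdef, le_min_iff]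
        constructor
        · rintro ⟨hx, h0, h1x⟩; exact ⟨h0, hx, h1x⟩
        · rintro ⟨h0, hx, h1x⟩; exact ⟨hx, h0, h1x⟩
      rw [hiset, Real.volume_Icc, sub_zero, ENNReal.toReal_ofReal hq0.le]
    have hNM : ∀ ω, (∑ i : Fin n, (if X n i ω ≤ h n then (1:ℝ) else 0))
        = ∑ i : Fin n, (if U i ω ≤ h n then (1:ℝ) else 0) := by
      intro ω
      obtain ⟨pe, hpe⟩ := hperm ω
      calc (∑ i : Fin n, (if X n i ω ≤ h n then (1:ℝ) else 0))
          = ∑ i : Fin n, (if U (pe i) ω ≤ h n then (1:ℝ) else 0) :=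
            Finset.sum_congr rfl fun i _ => by rw [hpe i]
        _ = ∑ i : Fin n, (if U i ω ≤ h n then (1:ℝ) else 0) :=
            Equiv.sum_comp pe (fun i => if U i ω ≤ h n then (1:ℝ) else 0)
    have haint : ∀ (V : Fin n → Ω n → ℝ) (hV : ∀ i, Measurable (V i)) (i : Fin n),
        Integrable (fun ω => if V i ω ≤ h n then (1:ℝ) else 0) (P n) := by
      intro V hV i
      refine bdd_int' (P n) (Measurable.ite ((hV i) measurableSet_Iic) measurable_const
        measurable_const) 1 (fun ω => ?_)
      by_cases hc : V i ω ≤ h n <;> simp [hc]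
    have hDsum : (∑ i : Fin n, ((P n) {ω | X n i ω ≤ h n}).toReal) = t := by
      have e1 : ∀ i : Fin n, ((P n) {ω | X n i ω ≤ h n}).toReal
          = ∫ ω, (if X n i ω ≤ h n then (1:ℝ) else 0) ∂(P n) :=
        fun i => (int_ite' _ (hXm i) _).symm
      rw [Finset.sum_congr rfl fun i _ => e1 i,
        ← integral_finset_sum _ (fun i _ => haint (X n) hXm i),
        integral_congr_ae (ae_of_all _ hNM),
        integral_finset_sum _ (fun i _ => haint U hUm i),
        Finset.sum_congr rfl fun i _ => int_ite' (P n) (hUm i) (h n),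
        Finset.sum_congr rfl fun i _ => hUq i,
        Finset.sum_const, Finset.card_univ, Fintype.card_fin, nsmul_eq_mul]
    have hNlt : (P n) {ω | (∑ i : Fin n, if X n i ω ≤ h n then (1:ℝ) else 0) < t/2}
        ≤ ENNReal.ofReal (4/t) := by
      have hset : {ω | (∑ i : Fin n, if X n i ω ≤ h n then (1:ℝ) else 0) < t/2}
          = {ω | (∑ i : Fin n, if U i ω ≤ h n then (1:ℝ) else 0) < t/2} := by
        ext ω
        rw [Set.mem_setOf_eq, Set.mem_setOf_eq, hNM ω]
      rw [hset]
      have hWsq := M_sq (P n) U hUm hUind (h n) q hq0.le hqle hUq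
      have hWm : Measurable (fun ω => ∑ i : Fin n, ((if U i ω ≤ h n then (1:ℝ) else 0) - q)) := by
        refine Finset.measurable_sum _ fun i _ => Measurable.sub ?_ measurable_const
        exact Measurable.ite ((hUm i) measurableSet_Iic) measurable_const measurable_const
      have hWabs : ∀ ω, |∑ i : Fin n, ((if U i ω ≤ h n then (1:ℝ) else 0) - q)| ≤ (n:ℝ) := by
        intro ω
        calc |∑ i : Fin n, ((if U i ω ≤ h n then (1:ℝ) else 0) - q)|
            ≤ ∑ i : Fin n, |(if U i ω ≤ h n then (1:ℝ) else 0) - q| :=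
              Finset.abs_sum_le_sum_abs _ _
          _ ≤ ∑ _i : Fin n, (1:ℝ) := by
              refine Finset.sum_le_sum fun i _ => ?_
              by_cases hc : U i ω ≤ h n <;> simp only [hc, if_true, if_false] <;>
                rw [abs_le] <;> constructor <;> linarith
          _ = (n:ℝ) := by simp
      have hsum : ∀ ω, (∑ i : Fin n, ((if U i ω ≤ h n then (1:ℝ) else 0) - q))
          = (∑ i : Fin n, (if U i ω ≤ h n then (1:ℝ) else 0)) - t := by
        intro ω
        rw [Finset.sum_sub_distrib, Finset.sum_const, Finset.card_univ, Fintype.card_fin,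
          nsmul_eq_mul]
      have hch := cheb (P n) hWm (n:ℝ) hWabs hm2 (le_of_le_of_eq hWsq rfl)
        {ω | (∑ i : Fin n, if U i ω ≤ h n then (1:ℝ) else 0) < t/2} (fun ω hω => by
          rw [Set.mem_setOf_eq] at hω
          rw [hsum ω]
          have h9 : (∑ i : Fin n, (if U i ω ≤ h n then (1:ℝ) else 0)) - t ≤ -(t/2) := by
            linarith
          calc t/2 ≤ -((∑ i : Fin n, (if U i ω ≤ h n then (1:ℝ) else 0)) - t) := by linarith
            _ ≤ |(∑ i : Fin n, (if U i ω ≤ h n then (1:ℝ) else 0)) - t| := neg_le_abs _)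
      refine le_trans hch (le_of_eq ?_)
      congr 1
      rw [show t/(t/2)^2 = (4:ℝ)/t by
        field_simp
        ring]
    -- the good set
    set G : Set (Ω n) := ⋂ i : Fin n, {ω | 0 ≤ U i ω} with hGdef
    have hGc : (P n) Gᶜ = 0 := by
      rw [hGdef, Set.compl_iInter]
      refine measure_iUnion_null fun i => ?_
      have hset : {ω | 0 ≤ U i ω}ᶜ = U i ⁻¹' (Set.Iio 0) := by
        ext ω
        simp [Set.mem_compl_iff, not_le]
      rw [hset, ← Measure.map_apply (hUm i) measurableSet_Iio, hUlaw i,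
        Measure.restrict_apply measurableSet_Iio]
      have : Set.Iio (0:ℝ) ∩ Set.Icc 0 1 = ∅ := by
        rw [Set.eq_empty_iff_forall_notMem]
        rintro x ⟨hx1, hx2, _⟩
        exact absurd hx2 (not_le.mpr hx1)
      rw [this, measure_empty]
    have hGpos : ∀ ω ∈ G, ∀ i, 0 ≤ X n i ω := by
      intro ω hω i
      obtain ⟨pe, hpe⟩ := hperm ω
      rw [hpe i]
      exact Set.mem_iInter.mp hω (pe i)
    have hmaster := master (P n) (X n) (ξ n) hXm (hξmeas n) (hξindep n) (hindep n)
      (h n) c p₀ p₁ hp₀0 hp₁1 hc1 hc2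
      (fun i => hplaw n i (-(1:ℝ)/2)) (fun i => hplaw n i ((1:ℝ)/2))
      (t/2) hm2 G hGpos
    refine le_trans hmaster ?_
    rw [hDsum, hGc, add_zero]
    have he1 : t / ((p₁ - c) * (t/2))^2 = (4/(p₁-c)^2)/t :=
      div_id2 _ _ (ne_of_gt heps1) htne
    have he2 : t / ((c - p₀) * (t/2))^2 = (4/(c-p₀)^2)/t :=
      div_id2 _ _ (ne_of_gt heps2) htne
    rw [he1, he2]
    calc (ENNReal.ofReal ((4/(p₁-c)^2)/t)
          + (P n) {ω | (∑ i : Fin n, if X n i ω ≤ h n then (1:ℝ) else 0) < t/2})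
        + (ENNReal.ofReal ((4/(c-p₀)^2)/t)
          + (P n) {ω | (∑ i : Fin n, if X n i ω ≤ h n then (1:ℝ) else 0) < t/2})
        ≤ (ENNReal.ofReal ((4/(p₁-c)^2)/t) + ENNReal.ofReal (4/t))
          + (ENNReal.ofReal ((4/(c-p₀)^2)/t) + ENNReal.ofReal (4/t)) :=
          add_le_add (add_le_add_right hNlt _) (add_le_add_right hNlt _)
      _ = ENNReal.ofReal ((4/(p₁-c)^2)/t) + ENNReal.ofReal ((4/(c-p₀)^2)/t)
          + (ENNReal.ofReal (4/t) + ENNReal.ofReal (4/t)) := add_add_add_comm _ _ _ _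
end

section
/- Consider the model with design (DD) or (RD) and i.i.d. Gaussian noise ξ_i ~ N(0, σ²). If n·h → 0 as n → ∞, then no test is consistent on the class S_0: for every sequence of tests τ_n ∈ {0,1} (measurable functions of the observations), liminf_{n→∞} γ_n(τ_n, S_0) ≥ 1/2; in particular γ_n(τ_n, S_0) does not converge to 0. Consequently, 1/n is a separation rate for detection on S_0 under Gaussian noise. -/
open MeasureTheory ProbabilityTheory Set Filter Real
open scoped ENNReal NNReal Topology symmDiff

/-- if `n·h_n → 0`, no test is consistent on `S₀` under Gaussian
noise: every sequence of tests has `liminf γ_n ≥ 1/2`. -/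
theorem stmt1
    (σ : ℝ) (hσ : 0 < σ)
    (h : ℕ → ℝ) (hh : ∀ n, 0 < h n)
    (hnh : Tendsto (fun n : ℕ => (n : ℝ) * h n) atTop (𝓝 0))
    (Ω : ℕ → Type) (mΩ : ∀ n, MeasurableSpace (Ω n))
    (P : ∀ n, Measure (Ω n)) (hP : ∀ n, IsProbabilityMeasure (P n))
    (X ξ : ∀ n, Fin n → Ω n → ℝ)
    (hnoise : ∀ n, IsIidGaussian (P n) n (ξ n) σ)
    (hdesign : (∀ n, IsDD n (X n)) ∨ (∀ n, IsRD (P n) n (X n)))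
    (hindep : ∀ n, NoiseIndepDesign (P n) n (X n) (ξ n))
    -- an arbitrary sequence of tests, as measurable functions of the observations
    (τ : ∀ n, (Fin n → ℝ × ℝ) → Bool)
    (hτ : ∀ n, Measurable (τ n)) :
    (1:ℝ≥0∞)/2 ≤
      Filter.liminf (fun n : ℕ =>
        -- type I error: under G = ∅ the observations are (Xᵢ, ξᵢ)
        (P n) {ω | τ n (fun i => (X n i ω, ξ n i ω)) = true}
        -- type II error: sup over G = [0,θ] ∈ S₀ with |G| ≥ h n
        + ⨆ (θ : ℝ) (_ : θ ∈ Set.Icc (0:ℝ) 1 ∧ h n ≤ θ),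
          (P n) {ω | τ n (fun i => (X n i ω, obsY (X n) (ξ n) 0 θ i ω)) = false})
        atTop := by
  -- abbreviation for the n-th error term
  set F : ℕ → ℝ≥0∞ := fun n =>
    (P n) {ω | τ n (fun i => (X n i ω, ξ n i ω)) = true}
    + ⨆ (θ : ℝ) (_ : θ ∈ Set.Icc (0:ℝ) 1 ∧ h n ≤ θ),
        (P n) {ω | τ n (fun i => (X n i ω, obsY (X n) (ξ n) 0 θ i ω)) = false}
    with hF
  have hev : ∀ᶠ n in atTop, (1:ℝ≥0∞)/2 ≤ F n := by
    have h1 : ∀ᶠ n : ℕ in atTop, (n : ℝ) * h n ≤ 1/2 := by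
      have := hnh.eventually (eventually_le_nhds (by norm_num : (0:ℝ) < 1/2))
      simpa using this
    filter_upwards [h1, eventually_ge_atTop 1] with n hn1 hn2
    have hnpos : (0:ℝ) < n := by exact_mod_cast hn2
    -- θ := h n is admissible
    have hθ1 : h n ≤ 1 := by
      have : h n ≤ (n:ℝ) * h n := le_mul_of_one_le_left (hh n).le (by exact_mod_cast hn2)
      linarith
    have hθmem : h n ∈ Set.Icc (0:ℝ) 1 ∧ h n ≤ h n := ⟨⟨(hh n).le, hθ1⟩, le_rfl⟩
    -- the good event: no design point in [0, h n]
    set E : Set (Ω n) := {ω | ∀ i, X n i ω ∉ Set.Icc (0:ℝ) (h n)} with hE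
    -- on E the two observation vectors coincide
    have hobs : ∀ ω ∈ E, (fun i => (X n i ω, obsY (X n) (ξ n) 0 (h n) i ω))
        = (fun i => (X n i ω, ξ n i ω)) := by
      intro ω hω
      funext i
      simp only [obsY, if_neg (hω i), zero_add]
    -- E is covered by the two error events
    have hcover : E ⊆ {ω | τ n (fun i => (X n i ω, ξ n i ω)) = true}
        ∪ {ω | τ n (fun i => (X n i ω, obsY (X n) (ξ n) 0 (h n) i ω)) = false} := by
      intro ω hω
      rcases Bool.eq_false_or_eq_true (τ n (fun i => (X n i ω, ξ n i ω))) with hb | hb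
      · left; exact hb
      · right
        show τ n (fun i => (X n i ω, obsY (X n) (ξ n) 0 (h n) i ω)) = false
        rw [hobs ω hω]; exact hb
    -- P(E) ≥ 1/2 in both designs
    have hPE : (1:ℝ≥0∞)/2 ≤ (P n) E := by
      have hhalf : ENNReal.ofReal ((n:ℝ) * h n) ≤ 1/2 := by
        calc ENNReal.ofReal ((n:ℝ) * h n) ≤ ENNReal.ofReal (1/2) :=
              ENNReal.ofReal_le_ofReal hn1
        _ = 1/2 := by
              rw [show (1/2:ℝ) = (2:ℝ)⁻¹ by norm_num,
                ENNReal.ofReal_inv_of_pos (by norm_num)]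
              simp
      rcases hdesign with hDD | hRD
      · -- deterministic design: E = univ
        have : E = Set.univ := by
          ext ω
          simp only [hE, Set.mem_setOf_eq, Set.mem_univ, iff_true]
          intro i hi
          rw [hDD n i ω] at hi
          have h2 : ((i:ℕ) + 1 : ℝ) / n ≤ h n := hi.2
          have h3 : ((i:ℕ) + 1 : ℝ) / n * n ≤ h n * n := by
            exact mul_le_mul_of_nonneg_right h2 hnpos.le
          rw [div_mul_cancel₀ _ (ne_of_gt hnpos)] at h3
          have h4 : (0:ℝ) ≤ (i:ℕ) := Nat.cast_nonneg _
          nlinarith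
        rw [this]
        rw [(hP n).measure_univ]
        exact ENNReal.half_le_self
      · -- random design
        obtain ⟨hXm, hmono, U, hUm, hUindep, hUlaw, hperm⟩ := hRD n
        have hcompl : Eᶜ ⊆ ⋃ i, {ω | U i ω ∈ Set.Icc (0:ℝ) (h n)} := by
          intro ω hω
          simp only [hE, Set.mem_compl_iff, Set.mem_setOf_eq, not_forall, not_not] at hω
          obtain ⟨i, hi⟩ := hω
          obtain ⟨p, hp⟩ := hperm ω
          refine Set.mem_iUnion.2 ⟨p i, ?_⟩
          show U (p i) ω ∈ Set.Icc (0:ℝ) (h n)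
          rw [← hp i]; exact hi
        have hPEc : (P n) Eᶜ ≤ 1/2 := by
          calc (P n) Eᶜ ≤ ∑' i : Fin n, (P n) {ω | U i ω ∈ Set.Icc (0:ℝ) (h n)} :=
                le_trans (measure_mono hcompl) (measure_iUnion_le _)
          _ ≤ ∑' _i : Fin n, ENNReal.ofReal (h n) := by
                refine ENNReal.tsum_le_tsum fun i => ?_
                have : (P n) {ω | U i ω ∈ Set.Icc (0:ℝ) (h n)}
                    = (Measure.map (U i) (P n)) (Set.Icc (0:ℝ) (h n)) := by
                  rw [Measure.map_apply (hUm i) measurableSet_Icc]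
                  rfl
                rw [this, hUlaw i, Measure.restrict_apply measurableSet_Icc]
                calc MeasureTheory.volume (Set.Icc 0 (h n) ∩ Set.Icc 0 1)
                    ≤ MeasureTheory.volume (Set.Icc (0:ℝ) (h n)) :=
                      measure_mono Set.inter_subset_left
                _ = ENNReal.ofReal (h n) := by rw [Real.volume_Icc]; norm_num
          _ = (n : ℝ≥0∞) * ENNReal.ofReal (h n) := by
                rw [tsum_fintype]; simp [Finset.sum_const, mul_comm]
          _ = ENNReal.ofReal ((n:ℝ) * h n) := by
                rw [ENNReal.ofReal_mul (by positivity)]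
                simp
          _ ≤ 1/2 := hhalf
        have h1le : (1:ℝ≥0∞) ≤ (P n) E + (P n) Eᶜ := by
          have := measure_union_le (μ := P n) E Eᶜ
          rw [Set.union_compl_self, (hP n).measure_univ] at this
          exact this
        have : (1:ℝ≥0∞) ≤ (P n) E + 1/2 := le_trans h1le (by gcongr)
        have h12 : (1:ℝ≥0∞) - 1/2 ≤ (P n) E := tsub_le_iff_right.2 this
        calc (1:ℝ≥0∞)/2 = 1 - 1/2 := by
              rw [ENNReal.sub_half ENNReal.one_ne_top]
        _ ≤ (P n) E := h12
    -- put the pieces together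
    calc (1:ℝ≥0∞)/2 ≤ (P n) E := hPE
    _ ≤ (P n) ({ω | τ n (fun i => (X n i ω, ξ n i ω)) = true}
        ∪ {ω | τ n (fun i => (X n i ω, obsY (X n) (ξ n) 0 (h n) i ω)) = false}) :=
          measure_mono hcover
    _ ≤ (P n) {ω | τ n (fun i => (X n i ω, ξ n i ω)) = true}
        + (P n) {ω | τ n (fun i => (X n i ω, obsY (X n) (ξ n) 0 (h n) i ω)) = false} :=
          measure_union_le _ _
    _ ≤ F n := by
          rw [hF]
          beta_reduce
          gcongr
          exact le_iSup₂_of_le (h n) hθmem le_rfl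
  calc (1:ℝ≥0∞)/2 = Filter.liminf (fun _ : ℕ => (1:ℝ≥0∞)/2) atTop :=
        (Filter.liminf_const _).symm
  _ ≤ Filter.liminf F atTop := Filter.liminf_le_liminf hev
end

section
/- Consider the model with design (DD) or (RD). Then for every integer n ≥ 1, the minimax risk on the class S_0 satisfies R_n(S_0) = inf_{Ĝ_n} sup_{G ∈ S_0} E_G[ |Ĝ_n Δ G| ] ≥ 1/(8n), where the infimum is over all estimators Ĝ_n (measurable maps from the observations to segments of [0,1]). -/
open MeasureTheory ProbabilityTheory Set Filter Real
open scoped ENNReal NNReal Topology symmDiff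

lemma vol_sd_lt_top (a b c d : ℝ) : volume ((Icc a b) ∆ (Icc c d)) < ⊤ :=
  lt_of_le_of_lt (le_trans (measure_mono symmDiff_subset_union) (measure_union_le _ _))
    (ENNReal.add_lt_top.2 ⟨measure_Icc_lt_top, measure_Icc_lt_top⟩)

lemma vol_symmDiff_Icc (a b c d : ℝ) :
    volume ((Icc a b) ∆ (Icc c d)) =
      (ENNReal.ofReal (b - a) - ENNReal.ofReal (min b d - max a c)) +
      (ENNReal.ofReal (d - c) - ENNReal.ofReal (min b d - max a c)) := by
  have hfin : volume (Icc a b ∩ Icc c d) ≠ ⊤ :=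
    (lt_of_le_of_lt (measure_mono inter_subset_left) measure_Icc_lt_top).ne
  rw [Set.symmDiff_def]
  rw [measure_union disjoint_sdiff_sdiff (measurableSet_Icc.diff measurableSet_Icc)]
  have h1 : Icc a b \ Icc c d = Icc a b \ (Icc a b ∩ Icc c d) := by
    rw [Set.diff_self_inter]
  have h2 : Icc c d \ Icc a b = Icc c d \ (Icc a b ∩ Icc c d) := by
    rw [Set.inter_comm, Set.diff_self_inter]
  rw [h1, h2,
    measure_diff inter_subset_left (measurableSet_Icc.inter measurableSet_Icc).nullMeasurableSet hfin,
    measure_diff inter_subset_right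
      (measurableSet_Icc.inter measurableSet_Icc).nullMeasurableSet hfin,
    Icc_inter_Icc, Real.volume_Icc, Real.volume_Icc, Real.volume_Icc]

lemma sd_meas (c d : ℝ) : Measurable (fun p : ℝ × ℝ => sd p.1 p.2 c d) := by
  have h : (fun p : ℝ × ℝ => sd p.1 p.2 c d) = fun p : ℝ × ℝ =>
      ((ENNReal.ofReal (p.2 - p.1) - ENNReal.ofReal (min p.2 d - max p.1 c)) +
       (ENNReal.ofReal (d - c) - ENNReal.ofReal (min p.2 d - max p.1 c))).toReal := by
    funext p; rw [sd, vol_symmDiff_Icc]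
  rw [h]
  have hm : Measurable fun p : ℝ × ℝ => ENNReal.ofReal (min p.2 d - max p.1 c) :=
    ((measurable_snd.min measurable_const).sub (measurable_fst.max measurable_const)).ennreal_ofReal
  exact (((measurable_snd.sub measurable_fst).ennreal_ofReal.sub hm).add
    (measurable_const.sub hm)).ennreal_toReal

lemma sd_tri (a b t : ℝ) (ht : 0 ≤ t) : t ≤ sd a b 0 0 + sd a b 0 t := by
  have h1 := vol_sd_lt_top a b 0 0
  have h2 := vol_sd_lt_top a b 0 t
  have hsub : (Icc (0:ℝ) 0) ∆ (Icc 0 t) ⊆ ((Icc a b) ∆ (Icc 0 0)) ∪ ((Icc a b) ∆ (Icc 0 t)) := by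
    have h := symmDiff_triangle (Icc (0:ℝ) 0) (Icc a b) (Icc 0 t)
    rwa [symmDiff_comm (Icc (0:ℝ) 0) (Icc a b)] at h
  have h0 : volume ((Icc (0:ℝ) 0) ∆ (Icc 0 t)) = ENNReal.ofReal t := by
    rw [symmDiff_of_le (Icc_subset_Icc le_rfl ht)]
    rw [measure_diff_null (by simp [Real.volume_Icc])]
    simp [Real.volume_Icc]
  have hvol : ENNReal.ofReal t ≤ volume ((Icc a b) ∆ (Icc 0 0)) + volume ((Icc a b) ∆ (Icc 0 t)) :=
    h0 ▸ le_trans (measure_mono hsub) (measure_union_le _ _)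
  have := ENNReal.toReal_mono (ENNReal.add_lt_top.2 ⟨h1, h2⟩).ne hvol
  rwa [ENNReal.toReal_ofReal ht, ENNReal.toReal_add h1.ne h2.ne] at this

lemma sd_nonneg (a b c d : ℝ) : 0 ≤ sd a b c d := ENNReal.toReal_nonneg
theorem stmt8_aux
    (Ω : Type*) [MeasurableSpace Ω] (P : Measure Ω) [IsProbabilityMeasure P]
    (n : ℕ) (hn : 1 ≤ n)
    (X ξ : Fin n → Ω → ℝ)
    (hXmeas : ∀ i, Measurable (X i))
    (hξmeas : ∀ i, Measurable (ξ i))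
    (hPA : ENNReal.ofReal (1/2) ≤
      P {ω | ∀ i, X i ω ∉ Icc (0:ℝ) (1 / (2 * (n:ℝ)))})
    (Ghat : (Fin n → ℝ × ℝ) → ℝ × ℝ)
    (hmeas : Measurable Ghat)
    (obsY : (Fin n → Ω → ℝ) → (Fin n → Ω → ℝ) → ℝ → ℝ → Fin n → Ω → ℝ)
    (hobs : ∀ X ξ a b i ω, obsY X ξ a b i ω = (if X i ω ∈ Set.Icc a b then (1:ℝ) else 0) + ξ i ω) :
    ENNReal.ofReal (1 / (8 * n)) ≤
      ⨆ (θ : ℝ) (_ : θ ∈ Set.Icc (0:ℝ) 1),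
        ∫⁻ ω, ENNReal.ofReal
          (sd (Ghat (fun i => (X i ω, obsY X ξ 0 θ i ω))).1
              (Ghat (fun i => (X i ω, obsY X ξ 0 θ i ω))).2 0 θ) ∂P := by
  have hnR : (0:ℝ) < n := by exact_mod_cast hn
  set t : ℝ := 1 / (2 * (n:ℝ)) with htdef
  have ht0 : 0 ≤ t := by positivity
  have ht1 : t ≤ 1 := by
    have h1 : (1:ℝ) ≤ n := by exact_mod_cast hn
    rw [htdef, div_le_one (by positivity)]
    linarith
  set A : Set Ω := {ω | ∀ i, X i ω ∉ Icc (0:ℝ) t} with hAdef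
  have hA : MeasurableSet A := by
    have : A = ⋂ i, (X i) ⁻¹' (Icc (0:ℝ) t)ᶜ := by
      ext ω; simp [hAdef]
    rw [this]
    exact MeasurableSet.iInter fun i => (hXmeas i) (measurableSet_Icc.compl)
  -- integrand as a function of θ
  set f : ℝ → Ω → ℝ≥0∞ := fun θ ω => ENNReal.ofReal
      (sd (Ghat (fun i => (X i ω, obsY X ξ 0 θ i ω))).1
          (Ghat (fun i => (X i ω, obsY X ξ 0 θ i ω))).2 0 θ) with hfdef
  have hfm : ∀ θ, Measurable (f θ) := by
    intro θ
    have hv : Measurable fun ω => (fun i => (X i ω, obsY X ξ 0 θ i ω)) := by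
      refine measurable_pi_lambda _ fun i => (hXmeas i).prodMk ?_
      rw [show obsY X ξ 0 θ i
          = fun ω => (if X i ω ∈ Set.Icc (0:ℝ) θ then (1:ℝ) else 0) + ξ i ω
        from funext fun ω => hobs X ξ 0 θ i ω]
      exact (Measurable.ite ((hXmeas i) measurableSet_Icc) measurable_const
        measurable_const).add (hξmeas i)
    exact (((sd_meas 0 θ).comp (hmeas.comp hv))).ennreal_ofReal
  set F : ℝ → ℝ≥0∞ := fun θ => ∫⁻ ω, f θ ω ∂P with hFdef
  set c : ℝ≥0∞ := ENNReal.ofReal (1 / (8 * (n:ℝ))) with hcdef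
  -- pointwise bound on A
  have hpt : ∀ ω ∈ A, ENNReal.ofReal t ≤ f 0 ω + f t ω := by
    intro ω hω
    have hveq : (fun i => (X i ω, obsY X ξ 0 (0:ℝ) i ω))
        = (fun i => (X i ω, obsY X ξ 0 t i ω)) := by
      funext i
      have hni : X i ω ∉ Icc (0:ℝ) t := hω i
      have hni0 : X i ω ∉ Icc (0:ℝ) 0 := fun h => hni (Icc_subset_Icc le_rfl ht0 h)
      simp only [hobs, if_neg hni, if_neg hni0]
    set a := (Ghat (fun i => (X i ω, obsY X ξ 0 t i ω))).1
    set b := (Ghat (fun i => (X i ω, obsY X ξ 0 t i ω))).2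
    have : f 0 ω + f t ω = ENNReal.ofReal (sd a b 0 0) + ENNReal.ofReal (sd a b 0 t) := by
      simp only [hfdef, hveq]
      rfl
    rw [this, ← ENNReal.ofReal_add (sd_nonneg a b 0 0) (sd_nonneg a b 0 t)]
    exact ENNReal.ofReal_le_ofReal (sd_tri a b t ht0)
  have key : c + c ≤ F 0 + F t := by
    calc c + c = ENNReal.ofReal t * ENNReal.ofReal (1/2) := by
          rw [← ENNReal.ofReal_add (by positivity) (by positivity),
            ← ENNReal.ofReal_mul ht0]
          congr 1
          rw [htdef]
          field_simp
          ring
      _ ≤ ENNReal.ofReal t * P A := mul_le_mul_right hPA _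
      _ = ∫⁻ _ in A, ENNReal.ofReal t ∂P := (setLIntegral_const A _).symm
      _ ≤ ∫⁻ ω in A, (f 0 ω + f t ω) ∂P := setLIntegral_mono' hA hpt
      _ ≤ ∫⁻ ω, (f 0 ω + f t ω) ∂P := lintegral_mono' Measure.restrict_le_self le_rfl
      _ = F 0 + F t := lintegral_add_left (hfm 0) _
  have hgoal : ∀ θ ∈ Icc (0:ℝ) 1, c ≤ F θ →
      c ≤ ⨆ (θ : ℝ) (_ : θ ∈ Set.Icc (0:ℝ) 1), F θ := by
    intro θ hθ hc
    exact le_trans hc (le_iSup_of_le θ (le_iSup_of_le hθ le_rfl))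
  have htmem : t ∈ Icc (0:ℝ) 1 := ⟨ht0, ht1⟩
  have h0mem : (0:ℝ) ∈ Icc (0:ℝ) 1 := ⟨le_rfl, zero_le_one⟩
  rcases le_total (F 0) (F t) with h | h
  · refine hgoal t htmem ?_
    by_contra hc
    push_neg at hc
    exact absurd (le_trans key (add_le_add h le_rfl)) (not_le.2 (ENNReal.add_lt_add hc hc))
  · refine hgoal 0 h0mem ?_
    by_contra hc
    push_neg at hc
    exact absurd (le_trans key (add_le_add le_rfl h)) (not_le.2 (ENNReal.add_lt_add hc hc))

lemma PA_RD
    (Ω : Type*) [MeasurableSpace Ω] (P : Measure Ω) [IsProbabilityMeasure P]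
    (n : ℕ) (hn : 1 ≤ n)
    (X : Fin n → Ω → ℝ)
    (U : Fin n → Ω → ℝ) (hUm : ∀ i, Measurable (U i))
    (hUmap : ∀ i, MeasureTheory.Measure.map (U i) P
        = MeasureTheory.volume.restrict (Set.Icc (0:ℝ) 1))
    (hperm : ∀ ω, ∃ p : Equiv.Perm (Fin n), ∀ i, X i ω = U (p i) ω) :
    ENNReal.ofReal (1/2) ≤ P {ω | ∀ i, X i ω ∉ Icc (0:ℝ) (1 / (2 * (n:ℝ)))} := by
  have hnR : (0:ℝ) < n := by exact_mod_cast hn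
  have hn1 : (1:ℝ) ≤ n := by exact_mod_cast hn
  set t : ℝ := 1 / (2 * (n:ℝ)) with htdef
  have ht0 : 0 ≤ t := by positivity
  have ht1 : t ≤ 1 := by rw [htdef, div_le_one (by positivity)]; linarith
  set B : Set Ω := ⋃ j, (U j) ⁻¹' (Icc (0:ℝ) t) with hBdef
  have hBm : MeasurableSet B :=
    MeasurableSet.iUnion fun j => (hUm j) measurableSet_Icc
  have hAeq : {ω | ∀ i, X i ω ∉ Icc (0:ℝ) t} = Bᶜ := by
    ext ω
    obtain ⟨p, hp⟩ := hperm ω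
    simp only [hBdef, mem_setOf_eq, mem_compl_iff, mem_iUnion, mem_preimage, not_exists]
    constructor
    · intro h j
      have := h (p.symm j)
      rwa [hp (p.symm j), Equiv.apply_symm_apply] at this
    · intro h i
      rw [hp i]; exact h (p i)
  have hB : P B ≤ ENNReal.ofReal (1/2) := by
    calc P B ≤ ∑' j, P ((U j) ⁻¹' (Icc (0:ℝ) t)) := measure_iUnion_le _
      _ = ∑' _ : Fin n, ENNReal.ofReal t := by
          refine tsum_congr fun j => ?_
          rw [← Measure.map_apply (hUm j) measurableSet_Icc, hUmap j,
            Measure.restrict_apply measurableSet_Icc,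
            Set.inter_eq_self_of_subset_left (Icc_subset_Icc le_rfl ht1),
            Real.volume_Icc, sub_zero]
      _ = n * ENNReal.ofReal t := by
          rw [tsum_fintype]
          simp [Finset.sum_const, Finset.card_univ, nsmul_eq_mul]
      _ = ENNReal.ofReal (1/2) := by
          rw [← ENNReal.ofReal_natCast n, ← ENNReal.ofReal_mul (Nat.cast_nonneg n)]
          congr 1
          rw [htdef]
          field_simp
  rw [hAeq]
  have hhalf : ENNReal.ofReal (1/2) + ENNReal.ofReal (1/2) = 1 := by
    rw [← ENNReal.ofReal_add (by norm_num) (by norm_num)]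
    norm_num
  have hle : ENNReal.ofReal (1/2) + ENNReal.ofReal (1/2) ≤ P Bᶜ + ENNReal.ofReal (1/2) := by
    rw [hhalf]
    calc (1:ℝ≥0∞) = P Bᶜ + P B := by
          rw [add_comm, measure_add_measure_compl hBm, measure_univ]
      _ ≤ P Bᶜ + ENNReal.ofReal (1/2) := add_le_add le_rfl hB
  exact (ENNReal.add_le_add_iff_right ENNReal.ofReal_ne_top).mp hle

/-- minimax lower bound `1/(8n)` on the class `S₀`, for designs (DD) or (RD). -/
theorem stmt8
    (σ : ℝ) (hσ : 0 < σ)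
    (Ω : Type*) [MeasurableSpace Ω] (P : Measure Ω) [IsProbabilityMeasure P]
    (n : ℕ) (hn : 1 ≤ n)
    (X ξ : Fin n → Ω → ℝ)
    (hdesign : IsDD n X ∨ IsRD P n X)
    (hnoise : IsIidSubgaussian P n ξ σ)
    (hindep : NoiseIndepDesign P n X ξ)
    (Ghat : (Fin n → ℝ × ℝ) → ℝ × ℝ)
    (hmeas : Measurable Ghat)
    (hrange : ∀ v, (Ghat v).1 ∈ Set.Icc (0:ℝ) 1 ∧ (Ghat v).2 ∈ Set.Icc (0:ℝ) 1) :
    ENNReal.ofReal (1 / (8 * n)) ≤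
      ⨆ (θ : ℝ) (_ : θ ∈ Set.Icc (0:ℝ) 1),
        ∫⁻ ω, ENNReal.ofReal
          (sd (Ghat (fun i => (X i ω, obsY X ξ 0 θ i ω))).1
              (Ghat (fun i => (X i ω, obsY X ξ 0 θ i ω))).2 0 θ) ∂P := by
  obtain ⟨hξm, -, -, -⟩ := hnoise
  have hnR : (0:ℝ) < n := by exact_mod_cast hn
  have hXmeas : ∀ i, Measurable (X i) := by
    rcases hdesign with hdd | hrd
    · intro i
      rw [show X i = fun _ : Ω => (((i:ℕ):ℝ) + 1) / (n:ℝ) from funext fun ω => hdd i ω]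
      exact measurable_const
    · exact hrd.1
  have hPA : ENNReal.ofReal (1/2) ≤
      P {ω | ∀ i, X i ω ∉ Icc (0:ℝ) (1 / (2 * (n:ℝ)))} := by
    rcases hdesign with hdd | hrd
    · have huniv : {ω | ∀ i, X i ω ∉ Icc (0:ℝ) (1 / (2 * (n:ℝ)))} = univ := by
        ext ω
        simp only [mem_setOf_eq, mem_univ, iff_true]
        intro i hi
        rw [hdd i ω] at hi
        have hnn : (0:ℝ) ≤ ((i:ℕ):ℝ) := Nat.cast_nonneg _
        have h2 : (1:ℝ) / (2 * n) < (((i:ℕ):ℝ) + 1) / n := by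
          rw [div_lt_div_iff₀ (by positivity) hnR]
          nlinarith
        exact absurd hi.2 (not_le.2 h2)
      rw [huniv, measure_univ]
      exact le_trans (ENNReal.ofReal_le_ofReal (by norm_num)) (le_of_eq ENNReal.ofReal_one)
    · obtain ⟨-, -, U, hUm, -, hUmap, hperm⟩ := hrd
      exact PA_RD Ω P n hn X U hUm hUmap hperm
  exact stmt8_aux Ω P n hn X ξ hXmeas hξm hPA Ghat hmeas obsY (fun X ξ a b i ω => rfl)
end

section
/- Let X_1 ≤ X_2 ≤ … ≤ X_n be the increasing reordering of n i.i.d. random variables uniformly distributed on [0,1]. Then for every pair of indices 1 ≤ k < l ≤ n, every h > 0 and every u > 0, P[ X_l − X_k > h ] ≤ n · exp( −(n−1) h (1 − e^{−u}) + u(l − k) ). -/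
open MeasureTheory ProbabilityTheory Set Filter Real
open scoped ENNReal NNReal Topology symmDiff

/-- lintegral of a finite product of independent nonnegative random variables. -/
lemma my_lintegral_finset_prod {Ω ι : Type*} [MeasurableSpace Ω] {P : Measure Ω}
    [IsProbabilityMeasure P] {g : ι → Ω → ℝ≥0∞}
    (hind : ProbabilityTheory.iIndepFun g P)
    (hg : ∀ i, Measurable (g i)) (s : Finset ι) :
    ∫⁻ ω, ∏ i ∈ s, g i ω ∂P = ∏ i ∈ s, ∫⁻ ω, g i ω ∂P := by
  classical
  induction s using Finset.induction_on with
  | empty => simp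
  | @insert a s ha ih =>
    simp only [Finset.prod_insert ha]
    have hprodmeas : Measurable (fun ω => ∏ i ∈ s, g i ω) :=
      Finset.measurable_prod s fun i _ => hg i
    have hindep : IndepFun (fun ω => ∏ i ∈ s, g i ω) (g a) P := by
      have := hind.indepFun_finsetProd_of_notMem hg ha
      have he : (∏ j ∈ s, g j) = fun ω => ∏ i ∈ s, g i ω := by
        funext ω; simp [Finset.prod_apply]
      rwa [he] at this
    have := lintegral_mul_eq_lintegral_mul_lintegral_of_indepFun hprodmeas (hg a) hindep
    simp only [Pi.mul_apply] at this
    calc ∫⁻ ω, g a ω * ∏ i ∈ s, g i ω ∂P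
        = ∫⁻ ω, (∏ i ∈ s, g i ω) * g a ω ∂P := by
          congr 1; funext ω; rw [mul_comm]
      _ = (∫⁻ ω, ∏ i ∈ s, g i ω ∂P) * ∫⁻ ω, g a ω ∂P := this
      _ = (∫⁻ ω, g a ω ∂P) * ∏ i ∈ s, ∫⁻ ω, g i ω ∂P := by rw [ih, mul_comm]

lemma my_one_dim {h u t : ℝ} (hh : 0 < h) (hu : 0 < u) (ht0 : 0 ≤ t) (ht1 : t + h ≤ 1) :
    ∫⁻ x, (if x ∈ Set.Ioc t (t+h) then ENNReal.ofReal (Real.exp (-u)) else 1)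
      ∂(volume.restrict (Set.Icc (0:ℝ) 1))
    ≤ ENNReal.ofReal (Real.exp (-(h*(1-Real.exp (-u))))) := by
  set μ : Measure ℝ := volume.restrict (Set.Icc (0:ℝ) 1) with hμdef
  have hμprob : IsProbabilityMeasure μ := ⟨by
    simp [hμdef, Real.volume_Icc]⟩
  have hIoc : μ (Set.Ioc t (t+h)) = ENNReal.ofReal h := by
    rw [hμdef, Measure.restrict_apply measurableSet_Ioc,
      Set.inter_eq_left.mpr ?_, Real.volume_Ioc]
    · norm_num
    · intro x hx
      exact ⟨le_of_lt (lt_of_le_of_lt ht0 hx.1), hx.2.trans ht1⟩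
  have hmeasf : Measurable (fun x : ℝ =>
      (if x ∈ Set.Ioc t (t+h) then ENNReal.ofReal (Real.exp (-u)) else 1)) :=
    Measurable.ite measurableSet_Ioc measurable_const measurable_const
  have hsplit := (lintegral_add_compl (fun x : ℝ =>
      (if x ∈ Set.Ioc t (t+h) then ENNReal.ofReal (Real.exp (-u)) else 1))
      (measurableSet_Ioc (a := t) (b := t+h)) (μ := μ)).symm
  have h1 : ∫⁻ x in Set.Ioc t (t+h), (if x ∈ Set.Ioc t (t+h) then
      ENNReal.ofReal (Real.exp (-u)) else 1) ∂μ
      = ENNReal.ofReal (Real.exp (-u)) * ENNReal.ofReal h := by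
    rw [setLIntegral_congr_fun measurableSet_Ioc
      (fun x hx => if_pos hx), setLIntegral_const, hIoc]
  have h2 : ∫⁻ x in (Set.Ioc t (t+h))ᶜ, (if x ∈ Set.Ioc t (t+h) then
      ENNReal.ofReal (Real.exp (-u)) else 1) ∂μ
      = ENNReal.ofReal (1 - h) := by
    rw [setLIntegral_congr_fun measurableSet_Ioc.compl
      (fun x hx => if_neg hx), setLIntegral_const, one_mul,
      measure_compl measurableSet_Ioc (measure_ne_top _ _), hIoc, measure_univ,
      ← ENNReal.ofReal_one, ← ENNReal.ofReal_sub _ hh.le]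
  have hle1 : h ≤ 1 := by linarith
  calc ∫⁻ x, (if x ∈ Set.Ioc t (t+h) then ENNReal.ofReal (Real.exp (-u)) else 1) ∂μ
      = ENNReal.ofReal (Real.exp (-u)) * ENNReal.ofReal h + ENNReal.ofReal (1 - h) := by
        rw [hsplit, h1, h2]
    _ = ENNReal.ofReal (Real.exp (-u) * h + (1 - h)) := by
        rw [← ENNReal.ofReal_mul (Real.exp_nonneg _), ← ENNReal.ofReal_add
          (by positivity) (by linarith)]
    _ ≤ ENNReal.ofReal (Real.exp (-(h*(1-Real.exp (-u))))) := by
        apply ENNReal.ofReal_le_ofReal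
        have := Real.add_one_le_exp (-(h*(1-Real.exp (-u))))
        nlinarith [Real.exp_nonneg (-u)]

lemma my_key {Ω : Type*} [MeasurableSpace Ω] {P : Measure Ω} [IsProbabilityMeasure P] {n : ℕ}
    {U : Fin n → Ω → ℝ} (hUm : ∀ i, Measurable (U i))
    (hUindep : ProbabilityTheory.iIndepFun U P)
    (hUlaw : ∀ i, MeasureTheory.Measure.map (U i) P
        = MeasureTheory.volume.restrict (Set.Icc (0:ℝ) 1))
    {h u : ℝ} (hh : 0 < h) (hu : 0 < u) (j : Fin n) :
    ∫⁻ ω, (if U j ω ≤ 1-h then (1:ℝ≥0∞) else 0) *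
      ∏ i ∈ ({j}ᶜ : Finset (Fin n)),
        (if U i ω ∈ Set.Ioc (U j ω) (U j ω + h) then ENNReal.ofReal (Real.exp (-u)) else 1) ∂P
    ≤ ENNReal.ofReal (Real.exp (-(h*(1-Real.exp (-u)))))^(n-1) := by
  classical
  set c1 : ℝ≥0∞ := ENNReal.ofReal (Real.exp (-(h*(1-Real.exp (-u))))) with hc1
  set c : ℝ≥0∞ := ENNReal.ofReal (Real.exp (-u)) with hc
  set s : Finset (Fin n) := {j}ᶜ with hs
  set e : ℝ → ℝ → ℝ≥0∞ := fun t x => if x ∈ Set.Ioc t (t+h) then c else 1 with he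
  have hemeas : Measurable fun q : ℝ × ℝ => e q.1 q.2 := by
    apply Measurable.ite ?_ measurable_const measurable_const
    exact (measurableSet_lt measurable_fst measurable_snd).inter
      (measurableSet_le measurable_snd (measurable_fst.add_const h))
  have het : ∀ t : ℝ, Measurable (e t) := fun t =>
    hemeas.comp (measurable_const.prodMk measurable_id)
  have hV : Measurable (fun ω (i : s) => U i ω) := measurable_pi_lambda _ fun i => hUm i
  set V : Ω → (s → ℝ) := fun ω i => U i ω with hVdef
  set A : Ω → ℝ := U j with hA
  haveI : IsProbabilityMeasure (P.map V) := Measure.isProbabilityMeasure_map hV.aemeasurable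
  haveI : IsProbabilityMeasure (P.map A) := Measure.isProbabilityMeasure_map (hUm j).aemeasurable
  have hindAV : IndepFun A V P := by
    have h1 := hUindep.indepFun_finset {j} s (by simp [hs]) hUm
    exact h1.comp (φ := fun v : (({j} : Finset (Fin n)) → ℝ) => v ⟨j, by simp⟩)
      (measurable_pi_apply _) measurable_id
  have hmap : P.map (fun ω => (A ω, V ω)) = (P.map A).prod (P.map V) :=
    (indepFun_iff_map_prod_eq_prod_map_map (hUm j).aemeasurable hV.aemeasurable).mp hindAV
  set G : ℝ × (s → ℝ) → ℝ≥0∞ :=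
    fun q => (if q.1 ≤ 1-h then (1:ℝ≥0∞) else 0) * ∏ i : s, e q.1 (q.2 i) with hG
  have hGmeas : Measurable G := by
    apply Measurable.mul
    · exact Measurable.ite (measurableSet_le measurable_fst measurable_const)
        measurable_const measurable_const
    · apply Finset.measurable_prod
      intro i _
      exact hemeas.comp (measurable_fst.prodMk ((measurable_pi_apply i).comp measurable_snd))
  have hpairmeas : Measurable fun ω => (A ω, V ω) := (hUm j).prodMk hV
  have hprodmeas : ∀ t : ℝ, Measurable fun v : s → ℝ => ∏ i : s, e t (v i) := by
    intro t
    apply Finset.measurable_prod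
    intro i _
    exact (het t).comp (measurable_pi_apply i)
  -- the inner integral bound
  have hinner : ∀ t : ℝ, t ∈ Set.Icc (0:ℝ) 1 →
      ∫⁻ v, G (t, v) ∂(P.map V) ≤ c1 ^ (n-1) := by
    intro t ht
    have hsplitG : ∀ v : s → ℝ, G (t, v)
        = (if t ≤ 1-h then (1:ℝ≥0∞) else 0) * ∏ i : s, e t (v i) := fun v => rfl
    by_cases hth : t ≤ 1 - h
    · have hJ : ∫⁻ v, ∏ i : s, e t (v i) ∂(P.map V) ≤ c1 ^ (n-1) := by
        have e1 : ∫⁻ v, ∏ i : s, e t (v i) ∂(P.map V)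
            = ∫⁻ ω, ∏ i : s, e t (V ω i) ∂P := lintegral_map (hprodmeas t) hV
        have e2 : ∫⁻ ω, ∏ i : s, e t (V ω i) ∂P = ∫⁻ ω, ∏ i ∈ s, e t (U i ω) ∂P := by
          congr 1; funext ω; exact Finset.prod_coe_sort s (fun i => e t (U i ω))
        have e3 : ∫⁻ ω, ∏ i ∈ s, e t (U i ω) ∂P = ∏ i ∈ s, ∫⁻ ω, e t (U i ω) ∂P := by
          apply my_lintegral_finset_prod
          · exact hUindep.comp (fun i x => e t x) (fun i => het t)
          · exact fun i => (het t).comp (hUm i)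
        have e4 : ∀ i : Fin n, ∫⁻ ω, e t (U i ω) ∂P ≤ c1 := by
          intro i
          have : ∫⁻ ω, e t (U i ω) ∂P = ∫⁻ x, e t x ∂(P.map (U i)) :=
            (lintegral_map (het t) (hUm i)).symm
          rw [this, hUlaw i]
          exact my_one_dim hh hu ht.1 (by linarith)
        rw [e1, e2, e3]
        calc ∏ i ∈ s, ∫⁻ ω, e t (U i ω) ∂P ≤ ∏ _i ∈ s, c1 :=
              Finset.prod_le_prod' (fun i _ => e4 i)
          _ = c1 ^ s.card := Finset.prod_const c1
          _ = c1 ^ (n-1) := by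
              rw [hs, Finset.card_compl, Finset.card_singleton, Fintype.card_fin]
      calc ∫⁻ v, G (t, v) ∂(P.map V)
          = ∫⁻ v, ∏ i : s, e t (v i) ∂(P.map V) := by
            simp only [hsplitG, if_pos hth, one_mul]
        _ ≤ c1 ^ (n-1) := hJ
    · simp only [hsplitG, if_neg hth, zero_mul, lintegral_zero]
      exact zero_le
  calc ∫⁻ ω, (if U j ω ≤ 1-h then (1:ℝ≥0∞) else 0) *
        ∏ i ∈ s, (if U i ω ∈ Set.Ioc (U j ω) (U j ω + h) then c else 1) ∂P
      = ∫⁻ ω, G (A ω, V ω) ∂P := by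
        congr 1; funext ω
        simp only [hG]
        congr 1
        exact (Finset.prod_coe_sort s (fun i => e (A ω) (U i ω))).symm
    _ = ∫⁻ q, G q ∂(P.map (fun ω => (A ω, V ω))) := (lintegral_map hGmeas hpairmeas).symm
    _ = ∫⁻ q, G q ∂((P.map A).prod (P.map V)) := by rw [hmap]
    _ = ∫⁻ t, ∫⁻ v, G (t, v) ∂(P.map V) ∂(P.map A) := MeasureTheory.lintegral_prod _ hGmeas.aemeasurable
    _ ≤ ∫⁻ _t, c1 ^ (n-1) ∂(P.map A) := by
        apply lintegral_mono_ae
        have hae : ∀ᵐ t ∂(P.map A), t ∈ Set.Icc (0:ℝ) 1 := by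
          rw [hA, hUlaw j]
          exact ae_restrict_mem measurableSet_Icc
        filter_upwards [hae] with t ht using hinner t ht
    _ = c1 ^ (n-1) := by rw [lintegral_const, measure_univ, mul_one]


/-- Lemma on order statistics of the uniform design: for the
increasing reordering `X₁ ≤ … ≤ Xₙ` of n i.i.d. uniforms on `[0,1]`,
`P[X_l - X_k > h] ≤ n exp(-(n-1)h(1-e^{-u}) + u(l-k))`. -/
theorem stmt16
    (Ω : Type*) [MeasurableSpace Ω] (P : Measure Ω) [IsProbabilityMeasure P]
    (n : ℕ) (X : Fin n → Ω → ℝ)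
    (hX : IsRD P n X)
    (k l : Fin n) (hkl : k < l)
    (h : ℝ) (hh : 0 < h) (u : ℝ) (hu : 0 < u) :
    P {ω | h < X l ω - X k ω}
      ≤ ENNReal.ofReal ((n : ℝ) *
          Real.exp (-((n : ℝ) - 1) * h * (1 - Real.exp (-u))
            + u * (((l : ℕ) : ℝ) - ((k : ℕ) : ℝ)))) := by
  classical
  obtain ⟨hXm, hXmono, U, hUm, hUindep, hUlaw, hUperm⟩ := hX
  set c1 : ℝ≥0∞ := ENNReal.ofReal (Real.exp (-(h*(1-Real.exp (-u))))) with hc1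
  set c : ℝ≥0∞ := ENNReal.ofReal (Real.exp (-u)) with hc
  set m : ℕ := (l:ℕ) - (k:ℕ) - 1 with hm
  have hkln : (k:ℕ) < (l:ℕ) := hkl
  have hn1 : 1 ≤ n := Fin.pos k
  set f : Fin n → Ω → ℝ≥0∞ := fun j ω => ENNReal.ofReal (Real.exp (u*m)) *
    ((if U j ω ≤ 1-h then (1:ℝ≥0∞) else 0) *
     ∏ i ∈ ({j}ᶜ : Finset (Fin n)),
       (if U i ω ∈ Set.Ioc (U j ω) (U j ω + h) then c else 1)) with hf
  have hgmeas : ∀ j, Measurable (fun ω =>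
      (if U j ω ≤ 1-h then (1:ℝ≥0∞) else 0) *
      ∏ i ∈ ({j}ᶜ : Finset (Fin n)),
        (if U i ω ∈ Set.Ioc (U j ω) (U j ω + h) then c else 1)) := by
    intro j
    apply Measurable.mul
    · exact Measurable.ite (measurableSet_le (hUm j) measurable_const)
        measurable_const measurable_const
    · apply Finset.measurable_prod
      intro i _
      apply Measurable.ite ?_ measurable_const measurable_const
      exact (measurableSet_lt (hUm j) (hUm i)).inter
        (measurableSet_le (hUm i) ((hUm j).add_const h))
  have hfmeas : ∀ j, Measurable (f j) := fun j => (hgmeas j).const_mul _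
  set N : Set Ω := ⋃ i, U i ⁻¹' (Set.Icc (0:ℝ) 1)ᶜ with hN
  have hNnull : P N = 0 := by
    apply measure_iUnion_null
    intro i
    have h0 : P (U i ⁻¹' (Set.Icc (0:ℝ) 1)ᶜ) = (P.map (U i)) (Set.Icc (0:ℝ) 1)ᶜ :=
      (Measure.map_apply (hUm i) measurableSet_Icc.compl).symm
    rw [h0, hUlaw i, Measure.restrict_apply measurableSet_Icc.compl,
      Set.compl_inter_self, measure_empty]
  have hsub : {ω | h < X l ω - X k ω} \ N ⊆ ⋃ j, {ω | 1 ≤ f j ω} := by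
    rintro ω ⟨hω, hωN⟩
    have hmemU : ∀ i, U i ω ∈ Set.Icc (0:ℝ) 1 := by
      intro i
      by_contra hcon
      exact hωN (Set.mem_iUnion.mpr ⟨i, hcon⟩)
    obtain ⟨p, hp⟩ := hUperm ω
    have hω' : h < X l ω - X k ω := hω
    set j : Fin n := p k with hj
    have haj : U j ω = X k ω := (hp k).symm
    have hXl1 : X l ω ≤ 1 := by rw [hp l]; exact (hmemU (p l)).2
    refine Set.mem_iUnion.mpr ⟨j, ?_⟩
    have hind : U j ω ≤ 1 - h := by rw [haj]; linarith
    have hcount : (Finset.univ.filter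
        (fun i => U i ω ∈ Set.Ioc (U j ω) (U j ω + h))).card ≤ m := by
      have hcard : (Finset.univ.filter
          (fun i => U i ω ∈ Set.Ioc (U j ω) (U j ω + h))).card
          = (Finset.univ.filter
            (fun i' => X i' ω ∈ Set.Ioc (X k ω) (X k ω + h))).card := by
        apply Finset.card_equiv p.symm
        intro i
        simp only [Finset.mem_filter, Finset.mem_univ, true_and]
        rw [hp (p.symm i), Equiv.apply_symm_apply, haj]
      rw [hcard]
      have hsubIoo : (Finset.univ.filter
          (fun i' => X i' ω ∈ Set.Ioc (X k ω) (X k ω + h))) ⊆ Finset.Ioo k l := by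
        intro i' hi'
        simp only [Finset.mem_filter, Finset.mem_univ, true_and, Set.mem_Ioc] at hi'
        rw [Finset.mem_Ioo]
        constructor
        · by_contra hle
          push_neg at hle
          exact absurd (hXmono ω hle) (not_le.mpr hi'.1)
        · by_contra hle
          push_neg at hle
          have h2 := hXmono ω hle
          have h3 := hi'.2
          simp only at h2 h3
          linarith
      calc _ ≤ (Finset.Ioo k l).card := Finset.card_le_card hsubIoo
        _ = (l:ℕ) - (k:ℕ) - 1 := Fin.card_Ioo k l
    have hprodge : c ^ m ≤ ∏ i ∈ ({j}ᶜ : Finset (Fin n)),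
        (if U i ω ∈ Set.Ioc (U j ω) (U j ω + h) then c else 1) := by
      have e1 : ∏ i ∈ ({j}ᶜ : Finset (Fin n)),
          (if U i ω ∈ Set.Ioc (U j ω) (U j ω + h) then c else 1)
          = c ^ (({j}ᶜ : Finset (Fin n)).filter
              (fun i => U i ω ∈ Set.Ioc (U j ω) (U j ω + h))).card := by
        rw [← Finset.prod_filter_mul_prod_filter_not ({j}ᶜ : Finset (Fin n))
          (fun i => U i ω ∈ Set.Ioc (U j ω) (U j ω + h))
          (fun i => if U i ω ∈ Set.Ioc (U j ω) (U j ω + h) then c else 1)]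
        rw [Finset.prod_congr rfl
          (fun i hi => if_pos ((Finset.mem_filter.mp hi).2)), Finset.prod_const]
        rw [Finset.prod_congr rfl
          (fun i hi => if_neg ((Finset.mem_filter.mp hi).2)), Finset.prod_const_one, mul_one]
      have hcle1 : c ≤ 1 := by
        rw [hc, ← ENNReal.ofReal_one]
        exact ENNReal.ofReal_le_ofReal (Real.exp_le_one_iff.mpr (by linarith))
      have hcard2 : (({j}ᶜ : Finset (Fin n)).filter
          (fun i => U i ω ∈ Set.Ioc (U j ω) (U j ω + h))).card ≤ m :=
        le_trans (Finset.card_le_card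
          (Finset.filter_subset_filter _ (Finset.subset_univ _))) hcount
      rw [e1]
      exact pow_le_pow_right_of_le_one' hcle1 hcard2
    show (1:ℝ≥0∞) ≤ f j ω
    rw [hf]
    simp only [if_pos hind, one_mul]
    calc (1:ℝ≥0∞) = ENNReal.ofReal (Real.exp (u*m)) * c ^ m := by
          rw [hc, ← ENNReal.ofReal_pow (Real.exp_nonneg _),
            ← ENNReal.ofReal_mul (Real.exp_nonneg _), ← Real.exp_nat_mul, ← Real.exp_add,
            show u*(m:ℝ) + (m:ℝ)*(-u) = 0 by ring, Real.exp_zero, ENNReal.ofReal_one]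
      _ ≤ _ := mul_le_mul_right hprodge _
  have hbound : ∀ j : Fin n, P {ω | 1 ≤ f j ω}
      ≤ ENNReal.ofReal (Real.exp (u*m)) * c1 ^ (n-1) := by
    intro j
    have h1 : P {ω | 1 ≤ f j ω} ≤ ∫⁻ ω, f j ω ∂P := by
      simpa using mul_meas_ge_le_lintegral₀ (hfmeas j).aemeasurable 1
    refine h1.trans ?_
    rw [hf]
    rw [lintegral_const_mul _ (hgmeas j)]
    exact mul_le_mul_right (my_key hUm hUindep hUlaw hh hu j) _
  calc P {ω | h < X l ω - X k ω}
      = P ({ω | h < X l ω - X k ω} \ N) := (measure_diff_null hNnull).symm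
    _ ≤ P (⋃ j, {ω | 1 ≤ f j ω}) := measure_mono hsub
    _ ≤ ∑' j, P {ω | 1 ≤ f j ω} := measure_iUnion_le _
    _ = ∑ j : Fin n, P {ω | 1 ≤ f j ω} := tsum_fintype _
    _ ≤ ∑ _j : Fin n, (ENNReal.ofReal (Real.exp (u*m)) * c1 ^ (n-1)) :=
        Finset.sum_le_sum (fun j _ => hbound j)
    _ = (n : ℝ≥0∞) * (ENNReal.ofReal (Real.exp (u*m)) * c1 ^ (n-1)) := by
        rw [Finset.sum_const, Finset.card_univ, Fintype.card_fin, nsmul_eq_mul]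
    _ ≤ ENNReal.ofReal ((n : ℝ) *
          Real.exp (-((n : ℝ) - 1) * h * (1 - Real.exp (-u))
            + u * (((l : ℕ) : ℝ) - ((k : ℕ) : ℝ)))) := by
        rw [hc1, ← ENNReal.ofReal_pow (Real.exp_nonneg _),
          ← ENNReal.ofReal_mul (Real.exp_nonneg _),
          ← ENNReal.ofReal_natCast n, ← ENNReal.ofReal_mul (Nat.cast_nonneg n)]
        apply ENNReal.ofReal_le_ofReal
        apply mul_le_mul_of_nonneg_left ?_ (Nat.cast_nonneg n)
        rw [← Real.exp_nat_mul, ← Real.exp_add]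
        apply Real.exp_le_exp.mpr
        have hmcast : (m:ℝ) = ((l:ℕ):ℝ) - ((k:ℕ):ℝ) - 1 := by
          rw [hm]
          have h1 : (1:ℕ) ≤ (l:ℕ) - (k:ℕ) := by omega
          push_cast [Nat.cast_sub (le_of_lt hkln), Nat.cast_sub h1]
          ring
        have hncast : ((n-1 : ℕ):ℝ) = (n:ℝ) - 1 := by
          push_cast [Nat.cast_sub hn1]
          ring
        rw [hmcast, hncast]
        nlinarith [hu.le]
end

section
/- Let A ≥ 1 and α > 0 be real numbers, and let Z be a nonnegative random variable satisfying E[Z^q] ≤ A (2q)! α^{2q} for every positive integer q. Then for all x ≥ 0, P[ Z ≥ α²(2x + 4A) ] ≤ exp( −x / (8√x + 192A) ). -/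
open MeasureTheory

lemma stmt19_key (A x : ℝ) (hA : 1 ≤ A) (hx : 0 ≤ x) :
    ∃ q : ℕ, 1 ≤ q ∧ A * (Nat.factorial (2 * q) : ℝ) / (2 * x + 4 * A) ^ q
      ≤ Real.exp (-x / (8 * Real.sqrt x + 192 * A)) := by
  have hA0 : (0:ℝ) < A := lt_of_lt_of_le one_pos hA
  set s : ℝ := Real.sqrt x with hs
  have hs0 : 0 ≤ s := Real.sqrt_nonneg x
  have hs2 : s ^ 2 = x := Real.sq_sqrt hx
  have hden : (0:ℝ) < 8 * s + 192 * A := by nlinarith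
  set E : ℝ := x / (8 * s + 192 * A) with hE
  have hxE : E * (8 * s + 192 * A) = x := div_mul_cancel₀ x hden.ne'
  have hE0 : 0 ≤ E := div_nonneg hx hden.le
  have hexp : -x / (8 * s + 192 * A) = -E := by rw [hE]; ring
  have hD : (0:ℝ) < 2 * x + 4 * A := by nlinarith
  rcases le_or_gt E (Real.log 2) with hcase | hcase
  · -- small deviation: q = 1
    refine ⟨1, le_refl 1, ?_⟩
    rw [hexp]
    have hfac : ((Nat.factorial (2 * 1)) : ℝ) = 2 := by norm_num [Nat.factorial]
    have h2 : (1:ℝ) / 2 ≤ Real.exp (-E) := by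
      have h3 := Real.exp_le_exp.mpr (neg_le_neg hcase)
      rw [Real.exp_neg, Real.exp_log (by norm_num : (0:ℝ) < 2)] at h3
      linarith
    have h1 : A * 2 / (2 * x + 4 * A) ^ 1 ≤ 1 / 2 := by
      rw [pow_one, div_le_div_iff₀ hD (by norm_num : (0:ℝ) < 2)]
      nlinarith
    rw [hfac]
    linarith
  · -- large deviation
    have hlog : (0.69:ℝ) < Real.log 2 := by
      have := Real.log_two_gt_d9; linarith
    have hE69 : (0.69:ℝ) < E := lt_trans hlog hcase
    have hsgt : (5.5:ℝ) < s := by nlinarith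
    have hAx : 128 * A < x := by nlinarith
    have hsqA0 : 0 ≤ Real.sqrt A := Real.sqrt_nonneg A
    have hAs : Real.sqrt A ^ 2 = A := Real.sq_sqrt hA0.le
    have hsA : 11 * Real.sqrt A ≤ s := by nlinarith
    have hE8 : 8 * E ≤ s := by nlinarith [mul_nonneg hA0.le hs0]
    have hsqA1 : 1 ≤ Real.sqrt A := by
      have := Real.sqrt_le_sqrt hA
      simpa using this
    set y : ℝ := E + 2 * Real.sqrt A - 2 with hy
    have hy0 : 0 < y := by nlinarith
    refine ⟨⌈y / 2⌉₊, Nat.one_le_iff_ne_zero.mpr (Nat.ceil_pos.mpr (by linarith)).ne', ?_⟩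
    set q : ℕ := ⌈y / 2⌉₊ with hq
    have h2q_ge : y ≤ 2 * (q:ℝ) := by
      have := Nat.le_ceil (y / 2)
      rw [← hq] at this
      linarith
    have h2q_le : (2 * (q:ℝ)) ≤ E + 2 * Real.sqrt A := by
      have := Nat.ceil_lt_add_one (by positivity : (0:ℝ) ≤ y / 2)
      rw [← hq] at this
      linarith
    have he : Real.exp 1 ≤ 2.72 := by linarith [Real.exp_one_lt_d9]
    have he0 : (0:ℝ) < Real.exp 1 := Real.exp_pos 1
    have hq0 : (0:ℝ) ≤ 2 * (q:ℝ) := by positivity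
    have hkey : Real.exp 1 * (2 * (q:ℝ)) ≤ s := by
      have h1 : (2 * (q:ℝ)) ≤ 27 / 88 * s := by linarith
      nlinarith [mul_le_mul he h1 hq0 (by norm_num : (0:ℝ) ≤ 2.72)]
    have hsq : (2 * (q:ℝ)) ^ 2 * Real.exp 2 ≤ 2 * x + 4 * A := by
      have h2 : Real.exp 2 = Real.exp 1 ^ 2 := by
        rw [← Real.exp_nat_mul]; norm_num
      have h3 : (Real.exp 1 * (2 * (q:ℝ))) ^ 2 ≤ s ^ 2 :=
        pow_le_pow_left₀ (by positivity) hkey 2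
      calc (2 * (q:ℝ)) ^ 2 * Real.exp 2 = (Real.exp 1 * (2 * (q:ℝ))) ^ 2 := by
            rw [h2]; ring
        _ ≤ s ^ 2 := h3
        _ = x := hs2
        _ ≤ 2 * x + 4 * A := by linarith
    have hratio : ((2 * (q:ℝ)) ^ 2) / (2 * x + 4 * A) ≤ Real.exp (-2) := by
      rw [div_le_iff₀ hD, Real.exp_neg, inv_mul_eq_div, le_div_iff₀ (Real.exp_pos 2)]
      linarith
    have hfact : ((Nat.factorial (2 * q)) : ℝ) ≤ (2 * (q:ℝ)) ^ (2 * q) := by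
      have := Nat.factorial_le_pow (2 * q)
      exact_mod_cast this
    have hDq : (0:ℝ) < (2 * x + 4 * A) ^ q := pow_pos hD q
    have hAexp : A ≤ Real.exp (2 * Real.sqrt A - 2) := by
      rw [← Real.log_le_iff_le_exp hA0]
      have h1 : Real.log A = 2 * Real.log (Real.sqrt A) := by
        rw [← hAs, Real.log_pow]
        push_cast
        ring_nf
        rw [hAs]
      have h2 : Real.log (Real.sqrt A) ≤ Real.sqrt A - 1 :=
        Real.log_le_sub_one_of_pos (by positivity)
      linarith
    rw [hexp]
    calc A * (Nat.factorial (2 * q) : ℝ) / (2 * x + 4 * A) ^ q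
        ≤ A * ((2 * (q:ℝ)) ^ (2 * q)) / (2 * x + 4 * A) ^ q := by
          gcongr
      _ = A * (((2 * (q:ℝ)) ^ 2 / (2 * x + 4 * A)) ^ q) := by
          rw [pow_mul, div_pow, mul_div_assoc]
      _ ≤ A * (Real.exp (-2)) ^ q := by
          apply mul_le_mul_of_nonneg_left _ hA0.le
          exact pow_le_pow_left₀ (by positivity) hratio q
      _ = A * Real.exp (-(2 * (q:ℝ))) := by
          have h4 : Real.exp (-(2 * (q:ℝ))) = Real.exp (-2) ^ q := by
            rw [← Real.exp_nat_mul]; congr 1; ring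
          rw [h4]
      _ ≤ Real.exp (2 * Real.sqrt A - 2) * Real.exp (-(2 * (q:ℝ))) :=
          mul_le_mul_of_nonneg_right hAexp (Real.exp_pos _).le
      _ = Real.exp (2 * Real.sqrt A - 2 - 2 * (q:ℝ)) := by
          rw [← Real.exp_add]; ring_nf
      _ ≤ Real.exp (-E) := by
          apply Real.exp_le_exp.mpr
          linarith

/-- a Bernstein-type deviation inequality for a nonnegative random
variable `Z` with `E[Z^q] ≤ A (2q)! α^{2q}` for every positive integer `q`. -/
theorem stmt19
    (Ω : Type*) [MeasurableSpace Ω] (P : Measure Ω) [IsProbabilityMeasure P]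
    (A α : ℝ) (hA : 1 ≤ A) (hα : 0 < α)
    (Z : Ω → ℝ) (hZmeas : Measurable Z) (hZnonneg : ∀ ω, 0 ≤ Z ω)
    (hmom : ∀ q : ℕ, 1 ≤ q →
      ∫⁻ ω, ENNReal.ofReal (Z ω ^ q) ∂P
        ≤ ENNReal.ofReal (A * (Nat.factorial (2 * q) : ℝ) * α ^ (2 * q)))
    (x : ℝ) (hx : 0 ≤ x) :
    P {ω | α ^ 2 * (2 * x + 4 * A) ≤ Z ω}
      ≤ ENNReal.ofReal (Real.exp (-x / (8 * Real.sqrt x + 192 * A))) := by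
  obtain ⟨q, hq1, hqkey⟩ := stmt19_key A x hA hx
  have hA0 : (0:ℝ) < A := lt_of_lt_of_le one_pos hA
  have hD : (0:ℝ) < 2 * x + 4 * A := by nlinarith
  set t : ℝ := α ^ 2 * (2 * x + 4 * A) with ht
  have ht0 : 0 < t := by positivity
  have htq : 0 < t ^ q := pow_pos ht0 q
  -- Markov
  have hsub : {ω | t ≤ Z ω} ⊆ {ω | ENNReal.ofReal (t ^ q) ≤ ENNReal.ofReal (Z ω ^ q)} := by
    intro ω hω
    exact ENNReal.ofReal_le_ofReal (pow_le_pow_left₀ ht0.le hω q)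
  have hmeas : AEMeasurable (fun ω => ENNReal.ofReal (Z ω ^ q)) P :=
    (ENNReal.measurable_ofReal.comp ((hZmeas.pow_const q))).aemeasurable
  have hM : ENNReal.ofReal (t ^ q) * P {ω | t ≤ Z ω}
      ≤ ∫⁻ ω, ENNReal.ofReal (Z ω ^ q) ∂P := by
    calc ENNReal.ofReal (t ^ q) * P {ω | t ≤ Z ω}
        ≤ ENNReal.ofReal (t ^ q) *
            P {ω | ENNReal.ofReal (t ^ q) ≤ ENNReal.ofReal (Z ω ^ q)} :=
          mul_le_mul_right (measure_mono hsub) _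
      _ ≤ _ := mul_meas_ge_le_lintegral₀ hmeas _
  have hstep : P {ω | t ≤ Z ω}
      ≤ ENNReal.ofReal (A * (Nat.factorial (2 * q) : ℝ) * α ^ (2 * q)) /
          ENNReal.ofReal (t ^ q) := by
    rw [ENNReal.le_div_iff_mul_le
      (Or.inl (ENNReal.ofReal_pos.mpr htq).ne')
      (Or.inl ENNReal.ofReal_ne_top)]
    rw [mul_comm]
    exact hM.trans (hmom q hq1)
  have heq : ENNReal.ofReal (A * (Nat.factorial (2 * q) : ℝ) * α ^ (2 * q)) /
      ENNReal.ofReal (t ^ q)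
      = ENNReal.ofReal (A * (Nat.factorial (2 * q) : ℝ) / (2 * x + 4 * A) ^ q) := by
    rw [← ENNReal.ofReal_div_of_pos htq]
    congr 1
    rw [ht, mul_pow, ← pow_mul]
    field_simp
  refine hstep.trans ?_
  rw [heq]
  exact ENNReal.ofReal_le_ofReal hqkey
end
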